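/- arXiv:math/0405090 — 3 statements merged into one kernel-verified Lean document; each statement's English description precedes it below -/
import Mathlib

section
/- Under the heavy-tailed Wigner setup, with probability tending to $1$ as $n \to \infty$, there is no pair $(i,j)$ with $1 \le i < j \le n$ such that $|a_{ij}| > b_n^{99/100}$ and $|a_{ii}| + |a_{jj}| > b_n^{1/10}$. -/
open MeasureTheory ProbabilityTheory Filter

private lemma chain_up (G : ℝ → ℝ) (β x₀ : ℝ) (hβ : 0 ≤ β) (hx₀ : 1 ≤ x₀)
    (hdbl : ∀ x, x₀ ≤ x → G x ≤ G (2*x) * 2 ^ β) :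
    ∀ k : ℕ, ∀ y, x₀ ≤ y → G y ≤ G (2^k * y) * ((2:ℝ)^k) ^ β := by
  intro k
  induction k with
  | zero => intro y hy; simp
  | succ k ih =>
    intro y hy
    have hy0 : (0:ℝ) < y := lt_of_lt_of_le one_pos (le_trans hx₀ hy)
    have h2k : x₀ ≤ 2^k * y :=
      le_trans hy (le_mul_of_one_le_left hy0.le (one_le_pow₀ one_le_two))
    calc G y ≤ G (2^k * y) * ((2:ℝ)^k)^β := ih y hy
      _ ≤ (G (2^(k+1) * y) * 2^β) * ((2:ℝ)^k)^β := by
          apply mul_le_mul_of_nonneg_right _ (Real.rpow_nonneg (by positivity) _)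
          have := hdbl (2^k*y) h2k
          rwa [show 2*(2^k*y) = 2^(k+1)*y by ring] at this
      _ = G (2^(k+1)*y) * ((2:ℝ)^(k+1))^β := by
          rw [pow_succ, Real.mul_rpow (by positivity) (by norm_num)]
          ring

private lemma potter_up (G : ℝ → ℝ) (β x₀ : ℝ) (hβ : 0 ≤ β) (hx₀ : 1 ≤ x₀)
    (hanti : Antitone G) (hGnn : ∀ x, 0 ≤ G x)
    (hdbl : ∀ x, x₀ ≤ x → G x ≤ G (2*x) * 2 ^ β) :
    ∀ y x, x₀ ≤ y → y ≤ x → G y ≤ G x * (2*x/y) ^ β := by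
  intro y x hy hyx
  have hy0 : (0:ℝ) < y := lt_of_lt_of_le one_pos (le_trans hx₀ hy)
  have hx0 : (0:ℝ) < x := lt_of_lt_of_le hy0 hyx
  have hr0 : (0:ℝ) < x / y := by positivity
  have hr1 : (1:ℝ) ≤ x / y := (one_le_div hy0).2 hyx
  set k := ⌊Real.logb 2 (x/y)⌋₊ with hk
  have hklb : (2:ℝ)^k ≤ x/y := by
    calc (2:ℝ)^k = (2:ℝ)^(k:ℝ) := (Real.rpow_natCast 2 k).symm
      _ ≤ (2:ℝ)^(Real.logb 2 (x/y)) :=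
          Real.rpow_le_rpow_of_exponent_le one_le_two
            (Nat.floor_le (Real.logb_nonneg one_lt_two hr1))
      _ = x/y := Real.rpow_logb two_pos (by norm_num) hr0
  have hkub : x/y < (2:ℝ)^(k+1) := by
    calc x/y = (2:ℝ)^(Real.logb 2 (x/y)) := (Real.rpow_logb two_pos (by norm_num) hr0).symm
      _ < (2:ℝ)^((k:ℝ)+1) := by
          apply Real.rpow_lt_rpow_of_exponent_lt one_lt_two
          rw [hk]; exact Nat.lt_floor_add_one _
      _ = (2:ℝ)^(k+1) := by rw [show ((k:ℝ)+1) = ((k+1:ℕ):ℝ) by push_cast; ring, Real.rpow_natCast]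
  have h2k : x₀ ≤ 2^k * y :=
    le_trans hy (le_mul_of_one_le_left hy0.le (one_le_pow₀ one_le_two))
  have step1 : G y ≤ G (2^k * y) * ((2:ℝ)^k) ^ β := chain_up G β x₀ hβ hx₀ hdbl k y hy
  have step2 : G (2^k * y) ≤ G (2^(k+1) * y) * 2^β := by
    have := hdbl (2^k*y) h2k
    rwa [show 2*(2^k*y) = 2^(k+1)*y by ring] at this
  have step3 : G (2^(k+1) * y) ≤ G x := by
    apply hanti
    calc x = (x/y) * y := by field_simp
      _ ≤ (2:ℝ)^(k+1) * y := mul_le_mul_of_nonneg_right hkub.le hy0.le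
  calc G y ≤ G (2^k * y) * ((2:ℝ)^k) ^ β := step1
    _ ≤ (G x * 2^β) * ((2:ℝ)^k)^β := by
        apply mul_le_mul_of_nonneg_right _ (Real.rpow_nonneg (by positivity) _)
        exact le_trans step2 (mul_le_mul_of_nonneg_right step3 (Real.rpow_nonneg (by norm_num) _))
    _ = G x * ((2:ℝ)^(k+1))^β := by
        rw [pow_succ, Real.mul_rpow (by positivity) (by norm_num)]; ring
    _ ≤ G x * (2*x/y)^β := by
        apply mul_le_mul_of_nonneg_left _ (hGnn x)
        apply Real.rpow_le_rpow (by positivity) _ hβ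
        calc ((2:ℝ))^(k+1) = 2 * 2^k := by ring
          _ ≤ 2 * (x/y) := by nlinarith
          _ = 2*x/y := by ring

private lemma chain_down (G : ℝ → ℝ) (β x₀ : ℝ) (hβ : 0 ≤ β) (hx₀ : 1 ≤ x₀)
    (hGnn : ∀ x, 0 ≤ G x)
    (hdbl : ∀ x, x₀ ≤ x → G (2*x) ≤ G x * 2 ^ (-β)) :
    ∀ k : ℕ, G (2^k * x₀) ≤ G x₀ * ((2:ℝ)^k) ^ (-β) := by
  intro k
  induction k with
  | zero => simp
  | succ k ih =>
    have hx0 : (0:ℝ) < x₀ := lt_of_lt_of_le one_pos hx₀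
    have h2k : x₀ ≤ 2^k * x₀ := le_mul_of_one_le_left hx0.le (one_le_pow₀ one_le_two)
    calc G (2^(k+1) * x₀) = G (2*(2^k * x₀)) := by ring_nf
      _ ≤ G (2^k * x₀) * 2^(-β) := hdbl _ h2k
      _ ≤ (G x₀ * ((2:ℝ)^k)^(-β)) * 2^(-β) :=
          mul_le_mul_of_nonneg_right ih (Real.rpow_nonneg (by norm_num) _)
      _ = G x₀ * ((2:ℝ)^(k+1))^(-β) := by
          rw [pow_succ, Real.mul_rpow (by positivity) (by norm_num)]; ring

private lemma potter_down (G : ℝ → ℝ) (β x₀ : ℝ) (hβ : 0 ≤ β) (hx₀ : 1 ≤ x₀)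
    (hanti : Antitone G) (hGnn : ∀ x, 0 ≤ G x)
    (hdbl : ∀ x, x₀ ≤ x → G (2*x) ≤ G x * 2 ^ (-β)) :
    ∀ x, x₀ ≤ x → G x ≤ G x₀ * (x/(2*x₀)) ^ (-β) := by
  intro x hx
  have hx0 : (0:ℝ) < x₀ := lt_of_lt_of_le one_pos hx₀
  have hxx : (0:ℝ) < x := lt_of_lt_of_le hx0 hx
  have hr0 : (0:ℝ) < x / x₀ := by positivity
  have hr1 : (1:ℝ) ≤ x / x₀ := (one_le_div hx0).2 hx
  set k := ⌊Real.logb 2 (x/x₀)⌋₊ with hk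
  have hklb : (2:ℝ)^k ≤ x/x₀ := by
    calc (2:ℝ)^k = (2:ℝ)^(k:ℝ) := (Real.rpow_natCast 2 k).symm
      _ ≤ (2:ℝ)^(Real.logb 2 (x/x₀)) :=
          Real.rpow_le_rpow_of_exponent_le one_le_two
            (Nat.floor_le (Real.logb_nonneg one_lt_two hr1))
      _ = x/x₀ := Real.rpow_logb two_pos (by norm_num) hr0
  have hkub : x/x₀ < (2:ℝ)^(k+1) := by
    calc x/x₀ = (2:ℝ)^(Real.logb 2 (x/x₀)) := (Real.rpow_logb two_pos (by norm_num) hr0).symm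
      _ < (2:ℝ)^((k:ℝ)+1) := by
          apply Real.rpow_lt_rpow_of_exponent_lt one_lt_two
          rw [hk]; exact Nat.lt_floor_add_one _
      _ = (2:ℝ)^(k+1) := by rw [show ((k:ℝ)+1) = ((k+1:ℕ):ℝ) by push_cast; ring, Real.rpow_natCast]
  calc G x ≤ G (2^k * x₀) := by
        apply hanti
        calc (2:ℝ)^k * x₀ ≤ (x/x₀) * x₀ := mul_le_mul_of_nonneg_right hklb hx0.le
          _ = x := by field_simp
    _ ≤ G x₀ * ((2:ℝ)^k)^(-β) := chain_down G β x₀ hβ hx₀ hGnn hdbl k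
    _ ≤ G x₀ * (x/(2*x₀))^(-β) := by
        apply mul_le_mul_of_nonneg_left _ (hGnn x₀)
        apply Real.rpow_le_rpow_of_nonpos (by positivity) _ (by linarith)
        calc x/(2*x₀) = (x/x₀)/2 := by ring
          _ ≤ (2:ℝ)^(k+1)/2 := by linarith
          _ = 2^k := by ring
/-- with probability tending to 1 there is no pair `i < j` with
`|a_{ij}| > bₙ^{99/100}` and `|a_{ii}| + |a_{jj}| > bₙ^{1/10}`. -/
theorem stmt_11 {Ω : Type*} [MeasurableSpace Ω] (μ : Measure Ω) [IsProbabilityMeasure μ]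
    (a : (n : ℕ) → Fin n → Fin n → Ω → ℝ)
    (hmeas : ∀ n i j, Measurable (a n i j))
    (hsymm : ∀ n (i j : Fin n) ω, a n i j ω = a n j i ω)
    (hindep : ∀ n, iIndepFun
      (fun q : {q : Fin n × Fin n // q.1 ≤ q.2} => a n q.1.1 q.1.2) μ)
    (α : ℝ) (hα : 0 < α) (hα2 : α < 2)
    (h : ℝ → ℝ) (hpos : ∀ x > 0, 0 < h x)
    (hslow : ∀ t > 0, Tendsto (fun x : ℝ => h (t * x) / h x) atTop (nhds 1))
    (htail : ∀ n (i j : Fin n), i ≤ j → ∀ x : ℝ, 0 < x →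
      μ {ω | x < |a n i j ω|} = ENNReal.ofReal (h x / x ^ α))
    (b : ℕ → ℝ) (hb : ∀ n, 0 < b n)
    (hbn : ∀ x > 0, Tendsto
      (fun n : ℕ => ((n : ℝ) ^ 2 / 2) * (h (b n * x) / (b n * x) ^ α))
      atTop (nhds (x ^ (-α)))) :
    Tendsto (fun n : ℕ =>
        μ {ω | ∃ i j : Fin n, i < j ∧ b n ^ ((99 : ℝ) / 100) < |a n i j ω| ∧
          b n ^ ((1 : ℝ) / 10) < |a n i i ω| + |a n j j ω|})
      atTop (nhds 0) := by
  -- The common tail function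
  set G : ℝ → ℝ := fun x => (μ {ω | x < |a 1 0 0 ω|}).toReal with hGdef
  have hGnn : ∀ x, 0 ≤ G x := fun x => ENNReal.toReal_nonneg
  have hGanti : Antitone G := by
    intro x y hxy
    exact ENNReal.toReal_mono (measure_ne_top μ _)
      (measure_mono (fun ω hω => lt_of_le_of_lt hxy hω))
  have hGeq : ∀ x : ℝ, 0 < x → G x = h x / x ^ α := by
    intro x hx
    have h0 := htail 1 0 0 le_rfl x hx
    simp only [hGdef, h0]
    exact ENNReal.toReal_ofReal (div_nonneg (hpos x hx).le (Real.rpow_pos_of_pos hx α).le)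
  have hGpos : ∀ x : ℝ, 0 < x → 0 < G x := by
    intro x hx
    rw [hGeq x hx]
    exact div_pos (hpos x hx) (Real.rpow_pos_of_pos hx α)
  have htail' : ∀ n (i j : Fin n), i ≤ j → ∀ x : ℝ, 0 < x →
      μ {ω | x < |a n i j ω|} = ENNReal.ofReal (G x) := by
    intro n i j hij x hx
    rw [htail n i j hij x hx, hGeq x hx]
  -- (n²/2) G(bₙ) → 1
  have hu : Tendsto (fun n : ℕ => ((n : ℝ) ^ 2 / 2) * G (b n)) atTop (nhds 1) := by
    have h1 := hbn 1 one_pos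
    rw [Real.one_rpow] at h1
    exact h1.congr (fun n => by rw [mul_one, hGeq _ (hb n)])
  have hn2 : Tendsto (fun n : ℕ => ((n : ℝ) ^ 2 / 2)) atTop atTop := by
    apply Tendsto.atTop_div_const two_pos
    have := (tendsto_natCast_atTop_atTop (R := ℝ)).atTop_mul_atTop₀
      (tendsto_natCast_atTop_atTop (R := ℝ))
    exact this.congr (fun n => by ring)
  have hG0 : Tendsto (fun n : ℕ => G (b n)) atTop (nhds 0) := by
    have := hu.div_atTop hn2
    apply this.congr'
    filter_upwards [eventually_ge_atTop 1] with n hn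
    have hn0 : ((n : ℝ) ^ 2 / 2) ≠ 0 := by
      have : (1:ℝ) ≤ (n:ℝ) := by exact_mod_cast hn
      positivity
    field_simp
  have hbtop : Tendsto b atTop atTop := by
    rw [tendsto_atTop]
    intro C
    have hC' : (0:ℝ) < max C 1 := lt_of_lt_of_le one_pos (le_max_right _ _)
    have hGC : 0 < G (max C 1) := hGpos _ hC'
    filter_upwards [hG0.eventually_lt_const hGC] with n hn
    by_contra hcon
    push_neg at hcon
    have : b n ≤ max C 1 := le_trans hcon.le (le_max_left _ _)
    exact absurd (hGanti this) (not_le.2 hn)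
  -- ratio limit G(2x)/G(x) → 2^{-α}
  have hratio : Tendsto (fun x : ℝ => G (2 * x) / G x) atTop (nhds ((2:ℝ) ^ (-α))) := by
    have h2 := (hslow 2 two_pos).mul (tendsto_const_nhds (x := (2:ℝ) ^ (-α)))
    rw [one_mul] at h2
    apply h2.congr'
    filter_upwards [eventually_gt_atTop 0] with x hx
    have hhx := (hpos x hx).ne'
    have hh2x := (hpos (2*x) (by linarith)).ne'
    have hxα := (Real.rpow_pos_of_pos hx α).ne'
    have h2α := (Real.rpow_pos_of_pos two_pos α).ne'
    rw [hGeq (2*x) (by linarith), hGeq x hx,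
      Real.mul_rpow (by norm_num : (0:ℝ) ≤ 2) hx.le, Real.rpow_neg (by norm_num : (0:ℝ) ≤ 2)]
    field_simp
  -- doubling bounds
  obtain ⟨x₀, hx₀1, hdblu, hdbld⟩ : ∃ x₀ : ℝ, 1 ≤ x₀ ∧
      (∀ x, x₀ ≤ x → G x ≤ G (2*x) * 2 ^ (5*α/4)) ∧
      (∀ x, x₀ ≤ x → G (2*x) ≤ G x * 2 ^ (-(3*α/4))) := by
    have hlt1 : (2:ℝ) ^ (-(5*α/4)) < 2 ^ (-α) :=
      Real.rpow_lt_rpow_of_exponent_lt one_lt_two (by linarith)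
    have hlt2 : (2:ℝ) ^ (-α) < 2 ^ (-(3*α/4)) :=
      Real.rpow_lt_rpow_of_exponent_lt one_lt_two (by linarith)
    have hev := (hratio.eventually_const_lt hlt1).and (hratio.eventually_lt_const hlt2)
    obtain ⟨x₁, hx₁⟩ := eventually_atTop.1 hev
    refine ⟨max x₁ 1, le_max_right _ _, ?_, ?_⟩
    · intro x hx
      have hxpos : (0:ℝ) < x := lt_of_lt_of_le one_pos (le_trans (le_max_right _ _) hx)
      have hGx := hGpos x hxpos
      obtain ⟨hA, -⟩ := hx₁ x (le_trans (le_max_left _ _) hx)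
      have hkey : (2:ℝ) ^ (-(5*α/4)) * 2 ^ (5*α/4) = 1 := by
        rw [← Real.rpow_add two_pos, show -(5*α/4) + 5*α/4 = 0 by ring, Real.rpow_zero]
      have hmul : (2:ℝ) ^ (-(5*α/4)) * G x < G (2*x) := (lt_div_iff₀ hGx).1 hA
      calc G x = G x * ((2:ℝ) ^ (-(5*α/4)) * 2 ^ (5*α/4)) := by rw [hkey, mul_one]
        _ = ((2:ℝ) ^ (-(5*α/4)) * G x) * 2 ^ (5*α/4) := by ring
        _ ≤ G (2*x) * 2 ^ (5*α/4) :=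
            mul_le_mul_of_nonneg_right hmul.le (Real.rpow_nonneg (by norm_num) _)
    · intro x hx
      have hxpos : (0:ℝ) < x := lt_of_lt_of_le one_pos (le_trans (le_max_right _ _) hx)
      have hGx := hGpos x hxpos
      obtain ⟨-, hB⟩ := hx₁ x (le_trans (le_max_left _ _) hx)
      have := (div_lt_iff₀ hGx).1 hB
      calc G (2*x) ≤ 2 ^ (-(3*α/4)) * G x := this.le
        _ = G x * 2 ^ (-(3*α/4)) := by ring
  have hx₀0 : (0:ℝ) < x₀ := lt_of_lt_of_le one_pos hx₀1
  -- the bounding sequence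
  set T : ℕ → ℝ := fun n =>
    (n:ℝ)^2 * (2 * (G (b n ^ ((99:ℝ)/100)) * G (b n ^ ((1:ℝ)/10) / 2))) with hTdef
  -- union bound
  have hbound : ∀ n : ℕ,
      μ {ω | ∃ i j : Fin n, i < j ∧ b n ^ ((99 : ℝ) / 100) < |a n i j ω| ∧
          b n ^ ((1 : ℝ) / 10) < |a n i i ω| + |a n j j ω|} ≤ ENNReal.ofReal (T n) := by
    intro n
    set c := b n ^ ((99:ℝ)/100) with hc
    set d := b n ^ ((1:ℝ)/10) with hd
    have hc0 : 0 < c := Real.rpow_pos_of_pos (hb n) _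
    have hd0 : 0 < d := Real.rpow_pos_of_pos (hb n) _
    set S : Fin n → Fin n → Set Ω := fun i j =>
      {ω | i < j ∧ c < |a n i j ω| ∧ d < |a n i i ω| + |a n j j ω|} with hS
    have hE : {ω | ∃ i j : Fin n, i < j ∧ c < |a n i j ω| ∧
        d < |a n i i ω| + |a n j j ω|} = ⋃ i, ⋃ j, S i j := by
      ext ω
      simp [hS, Set.mem_iUnion, Set.mem_setOf_eq]
    set t : ENNReal := ENNReal.ofReal (G c) * ENNReal.ofReal (G (d/2)) with ht
    have hmO : MeasurableSet {x : ℝ | c < |x|} :=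
      (isOpen_lt continuous_const continuous_abs).measurableSet
    have hmO' : MeasurableSet {x : ℝ | d/2 < |x|} :=
      (isOpen_lt continuous_const continuous_abs).measurableSet
    have hterm : ∀ i j : Fin n, μ (S i j) ≤ 2 * t := by
      intro i j
      by_cases hij : i < j
      · have hsub : S i j ⊆
            ((a n i j) ⁻¹' {x | c < |x|} ∩ (a n i i) ⁻¹' {x | d/2 < |x|}) ∪
            ((a n i j) ⁻¹' {x | c < |x|} ∩ (a n j j) ⁻¹' {x | d/2 < |x|}) := by
          rintro ω ⟨-, h1, h2⟩
          by_cases hi : d/2 < |a n i i ω|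
          · exact Or.inl ⟨h1, hi⟩
          · push_neg at hi
            exact Or.inr ⟨h1, by simp only [Set.mem_setOf_eq, Set.mem_preimage]; linarith⟩
        have hind1 : IndepFun (a n i j) (a n i i) μ := by
          refine (hindep n).indepFun (i := ⟨(i,j), le_of_lt hij⟩) (j := ⟨(i,i), le_refl i⟩) ?_
          intro hq
          rw [Subtype.mk.injEq, Prod.mk.injEq] at hq
          exact hij.ne' hq.2
        have hind2 : IndepFun (a n i j) (a n j j) μ := by
          refine (hindep n).indepFun (i := ⟨(i,j), le_of_lt hij⟩) (j := ⟨(j,j), le_refl j⟩) ?_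
          intro hq
          rw [Subtype.mk.injEq, Prod.mk.injEq] at hq
          exact hij.ne hq.1
        have hμA : μ ((a n i j) ⁻¹' {x | c < |x|}) = ENNReal.ofReal (G c) :=
          htail' n i j hij.le c hc0
        have hμB1 : μ ((a n i i) ⁻¹' {x | d/2 < |x|}) = ENNReal.ofReal (G (d/2)) :=
          htail' n i i le_rfl (d/2) (by positivity)
        have hμB2 : μ ((a n j j) ⁻¹' {x | d/2 < |x|}) = ENNReal.ofReal (G (d/2)) :=
          htail' n j j le_rfl (d/2) (by positivity)
        calc μ (S i j) ≤ μ (((a n i j) ⁻¹' {x | c < |x|} ∩ (a n i i) ⁻¹' {x | d/2 < |x|}) ∪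
              ((a n i j) ⁻¹' {x | c < |x|} ∩ (a n j j) ⁻¹' {x | d/2 < |x|})) := measure_mono hsub
          _ ≤ μ ((a n i j) ⁻¹' {x | c < |x|} ∩ (a n i i) ⁻¹' {x | d/2 < |x|}) +
              μ ((a n i j) ⁻¹' {x | c < |x|} ∩ (a n j j) ⁻¹' {x | d/2 < |x|}) :=
            measure_union_le _ _
          _ = μ ((a n i j) ⁻¹' {x | c < |x|}) * μ ((a n i i) ⁻¹' {x | d/2 < |x|}) +
              μ ((a n i j) ⁻¹' {x | c < |x|}) * μ ((a n j j) ⁻¹' {x | d/2 < |x|}) := by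
            rw [hind1.measure_inter_preimage_eq_mul _ _ hmO hmO',
              hind2.measure_inter_preimage_eq_mul _ _ hmO hmO']
          _ = 2 * t := by rw [hμA, hμB1, hμB2, ht]; ring
      · have : S i j = ∅ := by
          ext ω; simp [hS, hij]
        simp [this]
    calc μ {ω | ∃ i j : Fin n, i < j ∧ c < |a n i j ω| ∧ d < |a n i i ω| + |a n j j ω|}
        = μ (⋃ i, ⋃ j, S i j) := by rw [hE]
      _ ≤ ∑' i : Fin n, μ (⋃ j, S i j) := measure_iUnion_le _
      _ ≤ ∑' i : Fin n, ∑' j : Fin n, μ (S i j) :=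
          ENNReal.tsum_le_tsum (fun i => measure_iUnion_le _)
      _ ≤ ∑' _ : Fin n, ∑' _ : Fin n, 2 * t :=
          ENNReal.tsum_le_tsum (fun i => ENNReal.tsum_le_tsum (fun j => hterm i j))
      _ = (n : ENNReal) * ((n : ENNReal) * (2 * t)) := by
          simp [tsum_fintype, Finset.sum_const, Finset.card_univ, nsmul_eq_mul]
      _ = ENNReal.ofReal (T n) := by
          rw [hTdef]
          simp only [ht]
          rw [ENNReal.ofReal_mul (by positivity),
            ENNReal.ofReal_mul (by norm_num : (0:ℝ) ≤ 2),
            ENNReal.ofReal_mul (hGnn c),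
            ENNReal.ofReal_pow (Nat.cast_nonneg n), ENNReal.ofReal_natCast,
            ENNReal.ofReal_ofNat]
          ring
  -- T → 0
  have hT0 : Tendsto T atTop (nhds 0) := by
    have hn2G : Tendsto (fun n : ℕ => (n:ℝ)^2 * G (b n)) atTop (nhds 2) := by
      have := hu.const_mul (2:ℝ)
      rw [mul_one] at this
      exact this.congr (fun n => by ring)
    have hrneg : Tendsto (fun n : ℕ => b n ^ (-(α/80))) atTop (nhds 0) :=
      (tendsto_rpow_neg_atTop (by linarith : (0:ℝ) < α/80)).comp hbtop
    set R : ℕ → ℝ := fun n =>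
      ((n:ℝ)^2 * G (b n)) * ((2 * G x₀) * b n ^ (-(α/80))) with hRdef
    have hR0 : Tendsto R atTop (nhds 0) := by
      have := hn2G.mul ((hrneg.const_mul (2 * G x₀)))
      simpa [hRdef] using this
    refine squeeze_zero' ?_ ?_ hR0
    · filter_upwards with n
      simp only [hTdef]
      exact mul_nonneg (by positivity)
        (mul_nonneg (by norm_num) (mul_nonneg (hGnn _) (hGnn _)))
    · have e1 := hbtop.eventually_ge_atTop 1
      have e2 := ((tendsto_rpow_atTop (by norm_num : (0:ℝ) < 99/100)).comp
        hbtop).eventually_ge_atTop x₀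
      have e3 := (((tendsto_rpow_atTop (by norm_num : (0:ℝ) < 1/10)).comp
        hbtop).atTop_div_const two_pos).eventually_ge_atTop x₀
      have e4 := ((tendsto_rpow_atTop (by norm_num : (0:ℝ) < 1/100)).comp
        hbtop).eventually_ge_atTop 2
      have e5 := ((tendsto_rpow_atTop (by norm_num : (0:ℝ) < 1/20)).comp
        hbtop).eventually_ge_atTop (4 * x₀)
      filter_upwards [e1, e2, e3, e4, e5] with n h1 h2 h3 h4 h5
      simp only [Function.comp_apply] at h2 h3 h4 h5
      have hbn0 : (0:ℝ) < b n := hb n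
      set c := b n ^ ((99:ℝ)/100) with hc
      set d := b n ^ ((1:ℝ)/10) with hd
      have hc0 : 0 < c := Real.rpow_pos_of_pos hbn0 _
      have hd0 : 0 < d := Real.rpow_pos_of_pos hbn0 _
      have hcb : c ≤ b n := by
        calc c ≤ b n ^ (1:ℝ) := Real.rpow_le_rpow_of_exponent_le h1 (by norm_num)
          _ = b n := Real.rpow_one _
      -- Potter up bound
      have hup : G c ≤ G (b n) * (b n ^ ((1:ℝ)/50)) ^ (5*α/4) := by
        have hP := potter_up G (5*α/4) x₀ (by linarith) hx₀1 hGanti hGnn hdblu c (b n) h2 hcb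
        refine le_trans hP (mul_le_mul_of_nonneg_left ?_ (hGnn (b n)))
        apply Real.rpow_le_rpow (by positivity) _ (by linarith)
        have hbc : b n / c = b n ^ ((1:ℝ)/100) := by
          rw [eq_comm, eq_div_iff hc0.ne', hc, ← Real.rpow_add hbn0,
            show (1:ℝ)/100 + 99/100 = 1 by norm_num, Real.rpow_one]
        calc 2 * b n / c = 2 * (b n / c) := by ring
          _ = 2 * b n ^ ((1:ℝ)/100) := by rw [hbc]
          _ ≤ b n ^ ((1:ℝ)/100) * b n ^ ((1:ℝ)/100) :=
              mul_le_mul_of_nonneg_right h4 (Real.rpow_nonneg hbn0.le _)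
          _ = b n ^ ((1:ℝ)/50) := by
              rw [← Real.rpow_add hbn0, show (1:ℝ)/100 + 1/100 = 1/50 by norm_num]
      -- Potter down bound
      have hdown : G (d/2) ≤ G x₀ * (b n ^ ((1:ℝ)/20)) ^ (-(3*α/4)) := by
        have hP := potter_down G (3*α/4) x₀ (by linarith) hx₀1 hGanti hGnn hdbld (d/2) h3
        refine le_trans hP (mul_le_mul_of_nonneg_left ?_ (hGnn x₀))
        apply Real.rpow_le_rpow_of_nonpos (Real.rpow_pos_of_pos hbn0 _) _ (by linarith)
        have h4x : (0:ℝ) < 4 * x₀ := by linarith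
        have h20 : d / b n ^ ((1:ℝ)/20) = b n ^ ((1:ℝ)/20) := by
          rw [div_eq_iff (Real.rpow_pos_of_pos hbn0 ((1:ℝ)/20)).ne', hd, ← Real.rpow_add hbn0,
            show (1:ℝ)/20 + 1/20 = 1/10 by norm_num]
        calc b n ^ ((1:ℝ)/20) = d / b n ^ ((1:ℝ)/20) := h20.symm
          _ ≤ d / (4 * x₀) := by
              apply div_le_div_of_nonneg_left hd0.le h4x h5
          _ = d / 2 / (2 * x₀) := by ring
      -- combine
      have hp : (b n ^ ((1:ℝ)/50)) ^ (5*α/4) = b n ^ (α/40) := by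
        rw [← Real.rpow_mul hbn0.le, show (1:ℝ)/50*(5*α/4) = α/40 by ring]
      have hp' : (b n ^ ((1:ℝ)/20)) ^ (-(3*α/4)) = b n ^ (-(3*α/80)) := by
        rw [← Real.rpow_mul hbn0.le, show (1:ℝ)/20*(-(3*α/4)) = -(3*α/80) by ring]
      rw [hp] at hup
      rw [hp'] at hdown
      have hq : b n ^ (α/40) * b n ^ (-(3*α/80)) = b n ^ (-(α/80)) := by
        rw [← Real.rpow_add hbn0, show α/40 + -(3*α/80) = -(α/80) by ring]
      calc T n = (n:ℝ)^2 * (2 * (G c * G (d/2))) := by simp only [hTdef, hc, hd]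
        _ ≤ (n:ℝ)^2 * (2 * ((G (b n) * b n ^ (α/40)) * (G x₀ * b n ^ (-(3*α/80))))) := by
            apply mul_le_mul_of_nonneg_left _ (by positivity)
            apply mul_le_mul_of_nonneg_left _ (by norm_num)
            exact mul_le_mul hup hdown (hGnn _)
              (mul_nonneg (hGnn _) (Real.rpow_nonneg hbn0.le _))
        _ = ((n:ℝ)^2 * G (b n)) * ((2 * G x₀) * (b n ^ (α/40) * b n ^ (-(3*α/80)))) := by
            ring
        _ = R n := by rw [hq]
  -- conclusion
  have hOfReal : Tendsto (fun n => ENNReal.ofReal (T n)) atTop (nhds 0) := by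
    have := ENNReal.tendsto_ofReal hT0
    simpa using this
  exact tendsto_of_tendsto_of_tendsto_of_le_of_le tendsto_const_nhds hOfReal
    (fun n => zero_le) hbound
end

section
/- Under the heavy-tailed Wigner setup, for any $\delta > 0$, with probability tending to $1$ as $n \to \infty$ there is no row $i$, $1 \le i \le n$, containing at least two entries $a_{ij}$ with $|a_{ij}| > b_n^{3/4 + \delta}$. -/
set_option maxHeartbeats 1000000
open MeasureTheory ProbabilityTheory Filter
open scoped ENNReal NNReal

lemma aux_key (α : ℝ) (b : ℕ → ℝ) (hb : ∀ n, 0 < b n)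
    (T : ℝ → ℝ) (hT_anti : ∀ x y : ℝ, 0 < x → x ≤ y → T y ≤ T x)
    (hbn' : ∀ x > 0, Tendsto (fun n : ℕ => (n:ℝ)^2/2 * T (b n * x)) atTop (nhds (x ^ (-α))))
    (x y r : ℝ) (hx : 0 < x) (hy : 0 < y) (hr : 0 < r)
    (hcond : x^(-α) * r^2 < y^(-α)) :
    ∃ N : ℕ, 1 ≤ N ∧ ∀ m n : ℕ, N ≤ m → N ≤ n → (n:ℝ) ≤ r * m → b n * y < b m * x := by
  have hxa : (0:ℝ) < x^(-α) := Real.rpow_pos_of_pos hx _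
  have hya : (0:ℝ) < y^(-α) := Real.rpow_pos_of_pos hy _
  set X : ℝ := x^(-α) with hXdef
  set Y : ℝ := y^(-α) with hYdef
  set ε : ℝ := (Y - X*r^2) / (2*(r^2+1)) with hεdef
  have hε : 0 < ε := div_pos (by linarith) (by positivity)
  have hεle : ε * (2*(r^2+1)) = Y - X*r^2 := by
    rw [hεdef, div_mul_cancel₀]
    positivity
  have h1 := (hbn' x hx).eventually (eventually_lt_nhds (show X < X + ε by linarith))
  have h2 := (hbn' y hy).eventually (eventually_gt_nhds (show Y - ε < Y by linarith))
  rw [eventually_atTop] at h1 h2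
  obtain ⟨N₁, h1⟩ := h1
  obtain ⟨N₂, h2⟩ := h2
  refine ⟨max 1 (max N₁ N₂), le_max_left _ _, ?_⟩
  intro m n hm hn hnm
  have hm1 : 1 ≤ m := le_trans (le_max_left _ _) hm
  have hn1 : 1 ≤ n := le_trans (le_max_left _ _) hn
  have hmr : (1:ℝ) ≤ (m:ℝ) := by exact_mod_cast hm1
  have hnr : (1:ℝ) ≤ (n:ℝ) := by exact_mod_cast hn1
  have hTm := h1 m (le_trans (le_trans (le_max_left _ _) (le_max_right _ _)) hm)
  have hTn := h2 n (le_trans (le_trans (le_max_right _ _) (le_max_right _ _)) hn)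
  have hm2 : (0:ℝ) < (m:ℝ)^2 := by positivity
  have hn2 : (0:ℝ) < (n:ℝ)^2 := by positivity
  have hTm' : T (b m * x) < 2*(X+ε)/(m:ℝ)^2 := by
    rw [lt_div_iff₀ hm2]; nlinarith
  have hTn' : 2*(Y-ε)/(n:ℝ)^2 < T (b n * y) := by
    rw [div_lt_iff₀ hn2]; nlinarith
  have hB : 0 < Y - ε := by nlinarith [hεle, mul_nonneg hε.le (sq_nonneg r)]
  have hchain : 2*(X+ε)/(m:ℝ)^2 < 2*(Y-ε)/(n:ℝ)^2 := by
    have h3 : (n:ℝ)^2 ≤ r^2*(m:ℝ)^2 := by nlinarith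
    have h4 : 2*(Y-ε)/(r^2*(m:ℝ)^2) ≤ 2*(Y-ε)/(n:ℝ)^2 := by
      gcongr
    have h5 : 2*(X+ε)*r^2 < 2*(Y-ε) := by nlinarith [hεle, mul_nonneg hε.le (sq_nonneg r)]
    have h6 : 2*(X+ε)/(m:ℝ)^2 < 2*(Y-ε)/(r^2*(m:ℝ)^2) := by
      rw [div_lt_div_iff₀ hm2 (by positivity)]; nlinarith
    linarith
  have hTfinal : T (b m * x) < T (b n * y) := by linarith
  by_contra hcon
  push_neg at hcon
  exact absurd (hT_anti (b m * x) (b n * y) (mul_pos (hb m) hx) hcon) (by linarith)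

lemma aux_chain_low (b : ℕ → ℝ) (y : ℝ) (hy : 0 < y) (N : ℕ)
    (hstep : ∀ n, N ≤ n → b n * y < b (2*n)) :
    ∀ k : ℕ, b N * y^k ≤ b (2^k * N) := by
  intro k
  induction k with
  | zero => simp
  | succ k ih =>
    have h1 : N ≤ 2^k * N := Nat.le_mul_of_pos_left N (Nat.pow_pos (by norm_num))
    have h2 := hstep (2^k * N) h1
    have h3 : b N * y^(k+1) = (b N * y^k) * y := by ring
    rw [h3]
    have h4 : (b N * y^k) * y ≤ b (2^k * N) * y :=
      mul_le_mul_of_nonneg_right ih hy.le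
    have h5 : (2 : ℕ) * (2^k * N) = 2^(k+1) * N := by ring
    rw [h5] at h2
    linarith

lemma aux_chain_up (b : ℕ → ℝ) (y : ℝ) (hy : 0 < y) (N : ℕ)
    (hstep : ∀ n, N ≤ n → b (2*n) < b n * y) :
    ∀ k : ℕ, b (2^k * N) ≤ b N * y^k := by
  intro k
  induction k with
  | zero => simp
  | succ k ih =>
    have h1 : N ≤ 2^k * N := Nat.le_mul_of_pos_left N (Nat.pow_pos (by norm_num))
    have h2 := hstep (2^k * N) h1
    have h5 : (2 : ℕ) * (2^k * N) = 2^(k+1) * N := by ring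
    rw [h5] at h2
    have h4 : b (2^k * N) * y ≤ (b N * y^k) * y :=
      mul_le_mul_of_nonneg_right ih hy.le
    have h3 : (b N * y^k) * y = b N * y^(k+1) := by ring
    linarith


section
variable (α : ℝ) (hα : 0 < α) (b : ℕ → ℝ) (hb : ∀ n, 0 < b n)
    (T : ℝ → ℝ) (hT_anti : ∀ x y : ℝ, 0 < x → x ≤ y → T y ≤ T x)
    (hbn' : ∀ x > 0, Tendsto (fun n : ℕ => (n:ℝ)^2/2 * T (b n * x)) atTop (nhds (x ^ (-α))))



include hα hb hT_anti hbn' in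
lemma aux_pow_low (s : ℝ) (hs : 0 < s) (hs2 : s < 2/α) :
    ∀ᶠ n : ℕ in atTop, (n:ℝ)^(2/α - s) ≤ b n := by
  set e : ℝ := 2/α - s/2 with hedef
  have he : 0 < e := by simp only [hedef]; linarith
  set y₁ : ℝ := (2:ℝ)^e with hy₁def
  have hy₁ : 0 < y₁ := Real.rpow_pos_of_pos two_pos _
  have hcond₁ : (1:ℝ)^(-α) * (1/2)^2 < y₁^(-α) := by
    have h1 : y₁^(-α) = (2:ℝ)^(e * (-α)) := by
      rw [hy₁def, ← Real.rpow_mul (by norm_num : (0:ℝ) ≤ 2)]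
    have h2 : ((1:ℝ)/2)^2 = (2:ℝ)^((-2:ℝ)) := by
      rw [show ((-2:ℝ)) = ((-2 : ℤ):ℝ) by norm_num, Real.rpow_intCast]
      norm_num
    rw [Real.one_rpow, one_mul, h1, h2]
    apply (Real.rpow_lt_rpow_left_iff (by norm_num : (1:ℝ) < 2)).2
    have h4 : e * α = 2 - s/2*α := by rw [hedef, sub_mul, div_mul_cancel₀ _ hα.ne']
    have h5 : 0 < s/2*α := by positivity
    have h6 : e * -α = -(2 - s/2*α) := by rw [← h4]; ring
    rw [h6]; linarith
  obtain ⟨Nd, hNd1, hNd⟩ := aux_key α b hb T hT_anti hbn' 1 y₁ (1/2) one_pos hy₁ (by norm_num) hcond₁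
  have hcond₂ : (2:ℝ)^(-α) * 1^2 < (1:ℝ)^(-α) := by
    rw [Real.one_rpow, one_pow, mul_one]
    exact Real.rpow_lt_one_of_one_lt_of_neg (by norm_num) (by linarith)
  obtain ⟨Na, hNa1, hNa⟩ := aux_key α b hb T hT_anti hbn' 2 1 1 two_pos one_pos one_pos hcond₂
  set N₀ := max Nd Na with hN₀def
  have hN₀1 : 1 ≤ N₀ := le_trans hNd1 (le_max_left _ _)
  have hstep : ∀ n, N₀ ≤ n → b n * y₁ < b (2*n) := by
    intro n hn
    have hNdn : Nd ≤ n := le_trans (le_max_left _ _) hn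
    have h := hNd (2*n) n (by omega) hNdn (by push_cast; linarith)
    simpa using h
  have hchain := aux_chain_low b y₁ hy₁ N₀ hstep
  have hmain : ∀ n, N₀ ≤ n → (b N₀ * ((n:ℝ)/(2*N₀))^e) / 2 ≤ b n := by
    intro n hn
    set k := Nat.log 2 (n / N₀) with hkdef
    have hN₀pos : 0 < N₀ := hN₀1
    have hnN : n / N₀ ≠ 0 := by
      have : 1 ≤ n / N₀ := (Nat.one_le_div_iff hN₀pos).2 hn
      omega
    have hk1 : 2^k * N₀ ≤ n := by
      calc 2^k * N₀ ≤ (n / N₀) * N₀ := Nat.mul_le_mul_right _ (Nat.pow_log_le_self 2 hnN)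
        _ ≤ n := Nat.div_mul_le_self n N₀
    have hk2 : n < 2^(k+1) * N₀ :=
      (Nat.div_lt_iff_lt_mul hN₀pos).1 (Nat.lt_pow_succ_log_self (by norm_num : 1 < 2) (n / N₀))
    have hkN : N₀ ≤ 2^k * N₀ := Nat.le_mul_of_pos_left N₀ (Nat.pow_pos (by norm_num))
    have hA : b (2^k * N₀) * 1 < b n * 2 :=
      hNa n (2^k * N₀) (le_trans (le_max_right _ _) hn) (le_trans (le_max_right _ _) hkN)
        (by rw [one_mul]; exact_mod_cast hk1)
    rw [mul_one] at hA
    have hch := hchain k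
    -- ((n:ℝ)/(2*N₀))^e ≤ y₁^k
    have hpow : ((n:ℝ)/(2*N₀))^e ≤ y₁^k := by
      have hbase : (n:ℝ)/(2*N₀) ≤ (2:ℝ)^k := by
        rw [div_le_iff₀ (by positivity)]
        have : (n:ℝ) < ((2^(k+1) * N₀ : ℕ):ℝ) := by exact_mod_cast hk2
        push_cast at this
        rw [pow_succ] at this
        linarith
      have hyk : y₁^k = ((2:ℝ)^k)^e := by
        rw [hy₁def, ← Real.rpow_natCast ((2:ℝ)^e) k, ← Real.rpow_mul (by norm_num : (0:ℝ) ≤ 2),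
          mul_comm, Real.rpow_mul (by norm_num : (0:ℝ) ≤ 2), Real.rpow_natCast]
      rw [hyk]
      exact Real.rpow_le_rpow (by positivity) hbase he.le
    have : b N₀ * ((n:ℝ)/(2*N₀))^e ≤ b N₀ * y₁^k :=
      mul_le_mul_of_nonneg_left hpow (hb N₀).le
    linarith
  -- final: eventually n^(2/α - s) ≤ C n^e with absorption
  set C : ℝ := (b N₀ / 2) / ((2*(N₀:ℝ)))^e with hCdef
  have hC : 0 < C := by
    apply div_pos (by linarith [hb N₀])
    apply Real.rpow_pos_of_pos
    positivity
  have htend : Tendsto (fun n : ℕ => ((n:ℝ))^(-(s/2))) atTop (nhds 0) :=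
    (tendsto_rpow_neg_atTop (by linarith : (0:ℝ) < s/2)).comp tendsto_natCast_atTop_atTop
  filter_upwards [htend.eventually (eventually_lt_nhds hC), eventually_ge_atTop N₀,
    eventually_ge_atTop 1] with n hsmall hn hn1
  have hnr : (0:ℝ) < (n:ℝ) := by exact_mod_cast hn1
  have hsplit : (n:ℝ)^(2/α - s) = (n:ℝ)^e * (n:ℝ)^(-(s/2)) := by
    rw [← Real.rpow_add hnr]
    congr 1
    simp only [hedef]; ring
  have hdiv : (b N₀ * ((n:ℝ)/(2*N₀))^e) / 2 = C * (n:ℝ)^e := by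
    rw [hCdef, Real.div_rpow (by positivity) (by positivity)]
    ring
  have h1 : (n:ℝ)^e * (n:ℝ)^(-(s/2)) ≤ (n:ℝ)^e * C :=
    mul_le_mul_of_nonneg_left hsmall.le (by positivity)
  calc (n:ℝ)^(2/α - s) = (n:ℝ)^e * (n:ℝ)^(-(s/2)) := hsplit
    _ ≤ (n:ℝ)^e * C := h1
    _ = C * (n:ℝ)^e := by ring
    _ = (b N₀ * ((n:ℝ)/(2*N₀))^e) / 2 := hdiv.symm
    _ ≤ b n := hmain n hn

include hα hb hT_anti hbn' in
lemma aux_pow_up (s : ℝ) (hs : 0 < s) :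
    ∀ᶠ n : ℕ in atTop, b n ≤ (n:ℝ)^(2/α + s) := by
  set e : ℝ := 2/α + s/2 with hedef
  have he : 0 < e := by
    have : 0 < 2/α := by positivity
    simp only [hedef]; linarith
  set y₂ : ℝ := (2:ℝ)^e with hy₂def
  have hy₂ : 0 < y₂ := Real.rpow_pos_of_pos two_pos _
  have hcond₁ : y₂^(-α) * 2^2 < (1:ℝ)^(-α) := by
    have h1 : y₂^(-α) = (2:ℝ)^(e * (-α)) := by
      rw [hy₂def, ← Real.rpow_mul (by norm_num : (0:ℝ) ≤ 2)]
    have h2 : ((2:ℝ))^(2:ℕ) = (2:ℝ)^((2:ℝ)) := by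
      rw [show ((2:ℝ)) = (((2:ℕ)):ℝ) from by norm_num] 
      rw [Real.rpow_natCast]
    rw [Real.one_rpow, h1, h2, ← Real.rpow_add two_pos]
    apply Real.rpow_lt_one_of_one_lt_of_neg (by norm_num)
    have h4 : e * α = 2 + s/2*α := by rw [hedef, add_mul, div_mul_cancel₀ _ hα.ne']
    have h5 : 0 < s/2*α := by positivity
    have h6 : e * -α + 2 = -(s/2*α) := by
      rw [show e * -α = -(e*α) from by ring, h4]; ring
    rw [h6]; linarith
  obtain ⟨Nu, hNu1, hNu⟩ := aux_key α b hb T hT_anti hbn' y₂ 1 2 hy₂ one_pos two_pos hcond₁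
  have hcond₂ : (2:ℝ)^(-α) * 1^2 < (1:ℝ)^(-α) := by
    rw [Real.one_rpow, one_pow, mul_one]
    exact Real.rpow_lt_one_of_one_lt_of_neg (by norm_num) (by linarith)
  obtain ⟨Na, hNa1, hNa⟩ := aux_key α b hb T hT_anti hbn' 2 1 1 two_pos one_pos one_pos hcond₂
  set N₀ := max Nu Na with hN₀def
  have hN₀1 : 1 ≤ N₀ := le_trans hNu1 (le_max_left _ _)
  have hstep : ∀ n, N₀ ≤ n → b (2*n) < b n * y₂ := by
    intro n hn
    have hNun : Nu ≤ n := le_trans (le_max_left _ _) hn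
    have h := hNu n (2*n) hNun (by omega) (by push_cast; linarith)
    simpa using h
  have hchain := aux_chain_up b y₂ hy₂ N₀ hstep
  have hmain : ∀ n, N₀ ≤ n → b n ≤ 2 * b N₀ * ((2*(n:ℝ))/N₀)^e := by
    intro n hn
    set k := Nat.log 2 (n / N₀) with hkdef
    have hN₀pos : 0 < N₀ := hN₀1
    have hnN : n / N₀ ≠ 0 := by
      have : 1 ≤ n / N₀ := (Nat.one_le_div_iff hN₀pos).2 hn
      omega
    have hk1 : 2^k * N₀ ≤ n := by
      calc 2^k * N₀ ≤ (n / N₀) * N₀ := Nat.mul_le_mul_right _ (Nat.pow_log_le_self 2 hnN)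
        _ ≤ n := Nat.div_mul_le_self n N₀
    have hk2 : n < 2^(k+1) * N₀ :=
      (Nat.div_lt_iff_lt_mul hN₀pos).1 (Nat.lt_pow_succ_log_self (by norm_num : 1 < 2) (n / N₀))
    have hkN : N₀ ≤ 2^(k+1) * N₀ := Nat.le_mul_of_pos_left N₀ (Nat.pow_pos (by norm_num))
    have hA : b n * 1 < b (2^(k+1) * N₀) * 2 :=
      hNa (2^(k+1) * N₀) n (le_trans (le_max_right _ _) hkN) (le_trans (le_max_right _ _) hn)
        (by rw [one_mul]; exact_mod_cast hk2.le)
    rw [mul_one] at hA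
    have hch := hchain (k+1)
    have hpow : y₂^(k+1) ≤ ((2*(n:ℝ))/N₀)^e := by
      have hbase : ((2:ℝ))^(k+1) ≤ (2*(n:ℝ))/N₀ := by
        have hq : ((2:ℝ))^k ≤ (n:ℝ)/N₀ := by
          calc ((2:ℝ))^k = ((2^k : ℕ):ℝ) := by push_cast; ring
            _ ≤ (((n / N₀ : ℕ)):ℝ) := by exact_mod_cast Nat.pow_log_le_self 2 hnN
            _ ≤ (n:ℝ)/N₀ := Nat.cast_div_le
        rw [pow_succ]
        calc (2:ℝ)^k * 2 ≤ ((n:ℝ)/N₀) * 2 := by linarith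
          _ = 2*(n:ℝ)/N₀ := by ring
      have hyk : y₂^(k+1) = ((2:ℝ)^(k+1))^e := by
        rw [hy₂def, ← Real.rpow_natCast ((2:ℝ)^e) (k+1), ← Real.rpow_mul (by norm_num : (0:ℝ) ≤ 2),
          mul_comm, Real.rpow_mul (by norm_num : (0:ℝ) ≤ 2), Real.rpow_natCast]
      rw [hyk]
      exact Real.rpow_le_rpow (by positivity) hbase he.le
    have h7 : b N₀ * y₂^(k+1) ≤ b N₀ * ((2*(n:ℝ))/N₀)^e :=
      mul_le_mul_of_nonneg_left hpow (hb N₀).le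
    nlinarith [hb n, hb (2^(k+1)*N₀), hb N₀]
  set C : ℝ := 2 * b N₀ * ((2:ℝ)/N₀)^e with hCdef
  have hC : 0 < C := by
    have h1 : (0:ℝ) < ((2:ℝ)/N₀)^e := Real.rpow_pos_of_pos (by positivity) _
    have := hb N₀
    positivity
  have htend : Tendsto (fun n : ℕ => ((n:ℝ))^(s/2)) atTop atTop :=
    (tendsto_rpow_atTop (by linarith : (0:ℝ) < s/2)).comp tendsto_natCast_atTop_atTop
  filter_upwards [htend.eventually (eventually_ge_atTop C), eventually_ge_atTop N₀,
    eventually_ge_atTop 1] with n hbig hn hn1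
  have hnr : (0:ℝ) < (n:ℝ) := by exact_mod_cast hn1
  have hsplit : (n:ℝ)^(2/α + s) = (n:ℝ)^e * (n:ℝ)^(s/2) := by
    rw [← Real.rpow_add hnr]
    congr 1
    simp only [hedef]; ring
  have hfac : 2 * b N₀ * ((2*(n:ℝ))/N₀)^e = C * (n:ℝ)^e := by
    rw [hCdef, show (2*(n:ℝ))/N₀ = ((2:ℝ)/N₀) * n from by ring,
      Real.mul_rpow (by positivity) hnr.le]
    ring
  have h1 : C * (n:ℝ)^e ≤ (n:ℝ)^(s/2) * (n:ℝ)^e :=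
    mul_le_mul_of_nonneg_right hbig (by positivity)
  calc b n ≤ 2 * b N₀ * ((2*(n:ℝ))/N₀)^e := hmain n hn
    _ = C * (n:ℝ)^e := hfac
    _ ≤ (n:ℝ)^(s/2) * (n:ℝ)^e := h1
    _ = (n:ℝ)^(2/α + s) := by rw [hsplit]; ring

end

/-- for any `δ > 0`, with probability tending to 1 no row contains
two entries exceeding `bₙ^{3/4 + δ}` in absolute value. -/
theorem stmt_12 {Ω : Type*} [MeasurableSpace Ω] (μ : Measure Ω) [IsProbabilityMeasure μ]
    (a : (n : ℕ) → Fin n → Fin n → Ω → ℝ)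
    (hmeas : ∀ n i j, Measurable (a n i j))
    (hsymm : ∀ n (i j : Fin n) ω, a n i j ω = a n j i ω)
    (hindep : ∀ n, iIndepFun
      (fun q : {q : Fin n × Fin n // q.1 ≤ q.2} => a n q.1.1 q.1.2) μ)
    (α : ℝ) (hα : 0 < α) (hα2 : α < 2)
    (h : ℝ → ℝ) (hpos : ∀ x > 0, 0 < h x)
    (hslow : ∀ t > 0, Tendsto (fun x : ℝ => h (t * x) / h x) atTop (nhds 1))
    (htail : ∀ n (i j : Fin n), i ≤ j → ∀ x : ℝ, 0 < x →
      μ {ω | x < |a n i j ω|} = ENNReal.ofReal (h x / x ^ α))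
    (b : ℕ → ℝ) (hb : ∀ n, 0 < b n)
    (hbn : ∀ x > 0, Tendsto
      (fun n : ℕ => ((n : ℝ) ^ 2 / 2) * (h (b n * x) / (b n * x) ^ α))
      atTop (nhds (x ^ (-α)))) :
    ∀ δ : ℝ, 0 < δ →
      Tendsto (fun n : ℕ =>
          μ {ω | ∃ i j j' : Fin n, j ≠ j' ∧
            b n ^ ((3 : ℝ) / 4 + δ) < |a n i j ω| ∧
            b n ^ ((3 : ℝ) / 4 + δ) < |a n i j' ω|})
        atTop (nhds 0) := by
  intro δ hδ
  classical
  set T : ℝ → ℝ := fun x => h x / x ^ α with hTdef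
  have hT_pos : ∀ x : ℝ, 0 < x → 0 < T x := fun x hx =>
    div_pos (hpos x hx) (Real.rpow_pos_of_pos hx α)
  have hT_anti : ∀ x y : ℝ, 0 < x → x ≤ y → T y ≤ T x := by
    intro x y hx hxy
    have hy : 0 < y := lt_of_lt_of_le hx hxy
    have e1 := htail 1 0 0 le_rfl x hx
    have e2 := htail 1 0 0 le_rfl y hy
    have hsub : {ω | y < |a 1 0 0 ω|} ⊆ {ω | x < |a 1 0 0 ω|} :=
      fun ω hω => lt_of_le_of_lt hxy hω
    have hmono := measure_mono (μ := μ) hsub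
    rw [e1, e2] at hmono
    exact (ENNReal.ofReal_le_ofReal_iff (hT_pos x hx).le).1 hmono
  have hbn' : ∀ x > 0, Tendsto (fun n : ℕ => (n:ℝ)^2/2 * T (b n * x)) atTop (nhds (x ^ (-α))) :=
    hbn
  -- exponents
  set βe : ℝ := 3/4 + δ with hβedef
  set β' : ℝ := 3/4 + δ/2 with hβ'def
  have hβe : 0 < βe := by simp only [hβedef]; linarith
  have hβ' : 0 < β' := by simp only [hβ'def]; linarith
  set s : ℝ := (δ/α) / (2*(βe + β')) with hsdef
  have hβsum : 0 < βe + β' := by linarith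
  have hs : 0 < s := by
    apply div_pos (by positivity) (by linarith)
  have hs2 : s < 2/α := by
    have h4 : δ < 4*(βe+β') := by simp only [hβedef, hβ'def]; linarith
    have h5 : s = δ / (α * (2*(βe+β'))) := by rw [hsdef, div_div]
    rw [h5, div_lt_div_iff₀ (by positivity) hα]
    nlinarith [mul_pos (sub_pos.2 h4) hα]
  have he₀ : 0 < βe * (2/α - s) - β' * (2/α + s) := by
    have h1 : βe * (2/α - s) - β' * (2/α + s) = (2/α) * (δ/2) - s * (βe + β') := by
      simp only [hβedef, hβ'def]; ring
    have h2 : s * (βe + β') = (δ/α)/2 := by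
      rw [hsdef]; field_simp
    rw [h1, h2]
    have : (2/α) * (δ/2) = δ/α := by ring
    rw [this]
    have : δ/α - δ/α/2 = δ/(2*α) := by ring
    rw [this]; positivity
  have hlow := aux_pow_low α hα b hb T hT_anti hbn' s hs hs2
  have hup := aux_pow_up α hα b hb T hT_anti hbn' s hs
  -- the intermediate index
  set m : ℕ → ℕ := fun n => ⌈(n:ℝ)^β'⌉₊ with hmdef
  have hm_tend : Tendsto m atTop atTop := by
    apply Filter.tendsto_atTop.2
    intro K
    have h1 : ∀ᶠ n : ℕ in atTop, (K:ℝ) ≤ (n:ℝ)^β' :=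
      ((tendsto_rpow_atTop hβ').comp tendsto_natCast_atTop_atTop).eventually
        (eventually_ge_atTop _)
    filter_upwards [h1] with n hn
    exact_mod_cast le_trans hn (Nat.le_ceil _)
  -- tail bound along b
  have hTb : ∀ᶠ k : ℕ in atTop, T (b k) ≤ 3 / (k:ℝ)^2 := by
    have h1 := (hbn' 1 one_pos).eventually (eventually_lt_nhds
      (show (1:ℝ)^(-α) < 3/2 by rw [Real.one_rpow]; norm_num))
    filter_upwards [h1, eventually_ge_atTop 1] with k hk hk1
    have hkr : (0:ℝ) < (k:ℝ) := by exact_mod_cast hk1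
    rw [mul_one] at hk
    rw [le_div_iff₀ (by positivity)]
    nlinarith
  have hTmb : ∀ᶠ n : ℕ in atTop, T (b (m n)) ≤ 3 / ((m n : ℝ))^2 := hm_tend.eventually hTb
  -- b (m n) ≤ b n ^ βe eventually
  have hE2 : ∀ᶠ n : ℕ in atTop, b (m n) ≤ b n ^ βe := by
    have h2exp : ∀ᶠ n : ℕ in atTop,
        (2:ℝ)^(2/α+s) ≤ (n:ℝ)^(βe * (2/α - s) - β' * (2/α + s)) :=
      ((tendsto_rpow_atTop he₀).comp tendsto_natCast_atTop_atTop).eventually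
        (eventually_ge_atTop _)
    filter_upwards [hm_tend.eventually hup, hlow, h2exp, eventually_ge_atTop 1]
      with n hupm hlown h2n hn1
    have hnr : (1:ℝ) ≤ (n:ℝ) := by exact_mod_cast hn1
    have hnr0 : (0:ℝ) < (n:ℝ) := by linarith
    have hmle : (m n : ℝ) ≤ 2 * (n:ℝ)^β' := by
      have h1 : ((m n : ℕ):ℝ) < (n:ℝ)^β' + 1 := Nat.ceil_lt_add_one (by positivity)
      have h2 : (1:ℝ) ≤ (n:ℝ)^β' := Real.one_le_rpow hnr hβ'.le
      linarith
    have hbm : b (m n) ≤ (2 * (n:ℝ)^β')^(2/α+s) := by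
      refine le_trans hupm (Real.rpow_le_rpow (by positivity) hmle (by positivity))
    have hbig : (2 * (n:ℝ)^β')^(2/α+s) ≤ (n:ℝ)^((2/α - s) * βe) := by
      rw [Real.mul_rpow (by norm_num) (by positivity),
        ← Real.rpow_mul hnr0.le]
      have hsplit : (2/α - s) * βe
          = (βe * (2/α - s) - β' * (2/α + s)) + β' * (2/α + s) := by ring
      rw [hsplit, Real.rpow_add hnr0]
      exact mul_le_mul_of_nonneg_right h2n (by positivity)
    have hfin : (n:ℝ)^((2/α - s) * βe) = ((n:ℝ)^(2/α - s))^βe := Real.rpow_mul hnr0.le _ _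
    calc b (m n) ≤ (2 * (n:ℝ)^β')^(2/α+s) := hbm
      _ ≤ (n:ℝ)^((2/α - s) * βe) := hbig
      _ = ((n:ℝ)^(2/α - s))^βe := hfin
      _ ≤ (b n)^βe := Real.rpow_le_rpow (by positivity) hlown hβe.le
  -- tail bound at threshold
  have hE3 : ∀ᶠ n : ℕ in atTop, T (b n ^ βe) ≤ 3 * (n:ℝ)^(-(2*β')) := by
    filter_upwards [hE2, hTmb, eventually_ge_atTop 1] with n hE2n hTmbn hn1
    have hnr : (1:ℝ) ≤ (n:ℝ) := by exact_mod_cast hn1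
    have hnr0 : (0:ℝ) < (n:ℝ) := by linarith
    have h1 : T (b n ^ βe) ≤ T (b (m n)) := hT_anti _ _ (hb (m n)) hE2n
    have hmge : (n:ℝ)^β' ≤ (m n : ℝ) := Nat.le_ceil _
    have hpos' : (0:ℝ) < (n:ℝ)^β' := by positivity
    have h2 : (n:ℝ)^(2*β') ≤ ((m n : ℝ))^2 := by
      have : ((n:ℝ)^β')^2 ≤ ((m n : ℝ))^2 := by nlinarith
      calc (n:ℝ)^(2*β') = (n:ℝ)^(β'*(2:ℕ)) := by norm_num [mul_comm]
        _ = ((n:ℝ)^β')^(2:ℕ) := by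
            rw [Real.rpow_mul hnr0.le, Real.rpow_natCast]
        _ ≤ ((m n : ℝ))^2 := this
    have h3 : 3 / ((m n : ℝ))^2 ≤ 3 / (n:ℝ)^(2*β') := by
      apply div_le_div_of_nonneg_left (by norm_num) (by positivity) h2
    have h4 : 3 / (n:ℝ)^(2*β') = 3 * (n:ℝ)^(-(2*β')) := by
      rw [Real.rpow_neg hnr0.le, div_eq_mul_inv]
    linarith
  -- union bound
  have hUB : ∀ n : ℕ, μ {ω | ∃ i j j' : Fin n, j ≠ j' ∧
        b n ^ ((3:ℝ)/4 + δ) < |a n i j ω| ∧ b n ^ ((3:ℝ)/4 + δ) < |a n i j' ω|}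
      ≤ ((n:ℝ≥0∞))^3 * (ENNReal.ofReal (T (b n ^ βe)))^2 := by
    intro n
    set t : ℝ := b n ^ βe with htdef
    have ht : 0 < t := Real.rpow_pos_of_pos (hb n) _
    have hteq : b n ^ ((3:ℝ)/4 + δ) = t := by rw [htdef, hβedef]
    set q : Fin n → Fin n → {q : Fin n × Fin n // q.1 ≤ q.2} := fun i j =>
      if hij : i ≤ j then ⟨(i,j), hij⟩ else ⟨(j,i), le_of_not_ge hij⟩ with hqdef
    have haq : ∀ i j ω, a n i j ω = a n (q i j).1.1 (q i j).1.2 ω := by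
      intro i j ω
      simp only [hqdef]
      split_ifs with hij
      · rfl
      · exact hsymm n i j ω
    have hqinj : ∀ i j j' : Fin n, q i j = q i j' → j = j' := by
      intro i j j' hcon
      simp only [hqdef] at hcon
      split_ifs at hcon with h1 h2 h2 <;>
        simp only [Subtype.mk.injEq, Prod.mk.injEq] at hcon
      · exact hcon.2
      · exact hcon.2.trans hcon.1
      · exact hcon.1.trans hcon.2
      · exact hcon.1
    have hms : MeasurableSet {y : ℝ | t < |y|} :=
      measurableSet_lt measurable_const measurable_abs
    have hsetq : ∀ i j : Fin n, {ω | t < |a n i j ω|}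
        = a n (q i j).1.1 (q i j).1.2 ⁻¹' {y : ℝ | t < |y|} := by
      intro i j
      ext ω
      simp only [Set.mem_setOf_eq, Set.mem_preimage, haq i j ω]
    have hone : ∀ i j : Fin n, μ {ω | t < |a n i j ω|} = ENNReal.ofReal (T t) := by
      intro i j
      have h1 : {ω | t < |a n i j ω|} = {ω | t < |a n (q i j).1.1 (q i j).1.2 ω|} := by
        ext ω; simp only [Set.mem_setOf_eq, haq i j ω]
      rw [h1]
      exact htail n (q i j).1.1 (q i j).1.2 (q i j).2 t ht
    set S : Fin n × Fin n × Fin n → Set Ω := fun p =>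
      if p.2.1 ≠ p.2.2 then
        ({ω | t < |a n p.1 p.2.1 ω|} ∩ {ω | t < |a n p.1 p.2.2 ω|}) else ∅ with hSdef
    have hsub : {ω | ∃ i j j' : Fin n, j ≠ j' ∧
        b n ^ ((3:ℝ)/4 + δ) < |a n i j ω| ∧ b n ^ ((3:ℝ)/4 + δ) < |a n i j' ω|}
        ⊆ ⋃ p, S p := by
      rintro ω ⟨i, j, j', hne, h1, h2⟩
      rw [hteq] at h1 h2
      exact Set.mem_iUnion.2 ⟨(i, j, j'), by
        simp only [hSdef, if_pos hne]; exact ⟨h1, h2⟩⟩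
    have hS : ∀ p, μ (S p) ≤ (ENNReal.ofReal (T t))^2 := by
      rintro ⟨i, j, j'⟩
      by_cases hne : j ≠ j'
      · simp only [hSdef, if_pos hne]
        have hqne : q i j ≠ q i j' := fun hc => hne (hqinj i j j' hc)
        have hind := (hindep n).indepFun hqne
        have hmul := hind.measure_inter_preimage_eq_mul
          {y : ℝ | t < |y|} {y : ℝ | t < |y|} hms hms
        rw [hsetq i j, hsetq i j', hmul, ← hsetq i j, ← hsetq i j',
          hone i j, hone i j', sq]
      · simp only [hSdef, if_neg hne]
        simp
    calc μ _ ≤ μ (⋃ p, S p) := measure_mono hsub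
      _ ≤ ∑' p : Fin n × Fin n × Fin n, μ (S p) := measure_iUnion_le S
      _ = ∑ p : Fin n × Fin n × Fin n, μ (S p) := tsum_fintype _
      _ ≤ Finset.univ.card • (ENNReal.ofReal (T t))^2 :=
          Finset.sum_le_card_nsmul _ _ _ (fun p _ => hS p)
      _ = ((n:ℝ≥0∞))^3 * (ENNReal.ofReal (T t))^2 := by
          simp only [Finset.card_univ, Fintype.card_prod, Fintype.card_fin, nsmul_eq_mul]
          push_cast
          ring
  -- conclusion
  have hg : Tendsto (fun n : ℕ => ENNReal.ofReal (9 * (n:ℝ)^(-(2*δ)))) atTop (nhds 0) := by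
    have h1 : Tendsto (fun n : ℕ => (n:ℝ)^(-(2*δ))) atTop (nhds 0) :=
      (tendsto_rpow_neg_atTop (by linarith)).comp tendsto_natCast_atTop_atTop
    have h2 : Tendsto (fun n : ℕ => 9 * (n:ℝ)^(-(2*δ))) atTop (nhds 0) := by
      have := h1.const_mul (9:ℝ)
      simpa using this
    have h3 := ENNReal.tendsto_ofReal h2
    simpa using h3
  apply tendsto_of_tendsto_of_tendsto_of_le_of_le' tendsto_const_nhds hg
  · exact Filter.Eventually.of_forall (fun n => zero_le)
  · filter_upwards [hE3, eventually_ge_atTop 1] with n hE3n hn1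
    have hnr : (1:ℝ) ≤ (n:ℝ) := by exact_mod_cast hn1
    have hnr0 : (0:ℝ) < (n:ℝ) := by linarith
    have hu0 : 0 ≤ T (b n ^ βe) := (hT_pos _ (Real.rpow_pos_of_pos (hb n) _)).le
    refine le_trans (hUB n) ?_
    have hcast : ((n:ℝ≥0∞))^3 = ENNReal.ofReal ((n:ℝ)^(3:ℕ)) := by
      rw [ENNReal.ofReal_pow (by positivity), ENNReal.ofReal_natCast]
    rw [hcast, ← ENNReal.ofReal_pow hu0, ← ENNReal.ofReal_mul (by positivity)]
    apply ENNReal.ofReal_le_ofReal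
    have hsq : (T (b n ^ βe))^2 ≤ (3 * (n:ℝ)^(-(2*β')))^2 := by
      apply pow_le_pow_left₀ hu0 hE3n
    have hkey : (n:ℝ)^(3:ℕ) * (3 * (n:ℝ)^(-(2*β')))^2 = 9 * (n:ℝ)^(-(2*β')) * (n:ℝ)^(3:ℕ) * (n:ℝ)^(-(2*β')) := by ring
    have hfinal : (n:ℝ)^(3:ℕ) * (3 * (n:ℝ)^(-(2*β')))^2 ≤ 9 * (n:ℝ)^(-(2*δ)) := by
      have hr1 : (n:ℝ)^(3:ℕ) = (n:ℝ)^((3:ℕ):ℝ) := (Real.rpow_natCast _ 3).symm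
      have hr2 : (n:ℝ)^((3:ℕ):ℝ) * (n:ℝ)^(-(2*β')) * (n:ℝ)^(-(2*β'))
          = (n:ℝ)^(((3:ℕ):ℝ) + -(2*β') + -(2*β')) := by
        rw [Real.rpow_add hnr0, Real.rpow_add hnr0]
      have hr3 : ((3:ℕ):ℝ) + -(2*β') + -(2*β') = -(2*δ) := by
        push_cast; simp only [hβ'def]; ring
      calc (n:ℝ)^(3:ℕ) * (3 * (n:ℝ)^(-(2*β')))^2
          = 9 * ((n:ℝ)^((3:ℕ):ℝ) * (n:ℝ)^(-(2*β')) * (n:ℝ)^(-(2*β'))) := by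
            rw [← hr1]; ring
        _ = 9 * (n:ℝ)^(-(2*δ)) := by rw [hr2, hr3]
        _ ≤ 9 * (n:ℝ)^(-(2*δ)) := le_rfl
    calc (n:ℝ)^(3:ℕ) * (T (b n ^ βe))^2 ≤ (n:ℝ)^(3:ℕ) * (3 * (n:ℝ)^(-(2*β')))^2 :=
          mul_le_mul_of_nonneg_left hsq (by positivity)
      _ ≤ 9 * (n:ℝ)^(-(2*δ)) := hfinal
end

section
/- Under the heavy-tailed Wigner setup, as $n \to \infty$, the probability that there exists a row $i$ with $\max_{1 \le j \le n} |a_{ij}| > b_n^{3/4 + \alpha/8}$ and $(\sum_{1 \le j \le n} |a_{ij}|) - \max_{1 \le j \le n} |a_{ij}| > b_n^{3/4 + \alpha/8}$ tends to $0$. -/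
open MeasureTheory ProbabilityTheory Filter
open scoped ENNReal NNReal

section Aux

variable {Ω : Type*} [MeasurableSpace Ω] {μ : Measure Ω}

/-- Reindexing an independent family along an injective map. -/
lemma iIndepFun_comp_inj {ι ι' β : Type*} [DecidableEq ι] [mβ : MeasurableSpace β]
    {f : ι → Ω → β} (hf : iIndepFun f μ)
    {φ : ι' → ι} (hφ : Function.Injective φ) :
    iIndepFun (fun k => f (φ k)) μ := by
  rw [iIndepFun_iff_measure_inter_preimage_eq_mul] at hf ⊢
  intro S sets hsets
  have key := hf (S.image φ)
    (sets := Function.extend φ sets fun _ => Set.univ) ?_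
  · have h1 : (⋂ i ∈ S.image φ, f i ⁻¹' (Function.extend φ sets fun _ => Set.univ) i)
        = ⋂ k ∈ S, f (φ k) ⁻¹' sets k := by
      ext ω
      simp only [Set.mem_iInter, Finset.mem_image]
      constructor
      · intro H k hk
        have := H (φ k) ⟨k, hk, rfl⟩
        rwa [hφ.extend_apply] at this
      · rintro H i ⟨k, hk, rfl⟩
        rw [hφ.extend_apply]
        exact H k hk
    have h2 : (∏ i ∈ S.image φ, μ (f i ⁻¹' (Function.extend φ sets fun _ => Set.univ) i))
        = ∏ k ∈ S, μ (f (φ k) ⁻¹' sets k) := by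
      rw [Finset.prod_image (fun x _ y _ h => hφ h)]
      exact Finset.prod_congr rfl fun k _ => by rw [hφ.extend_apply]
    rw [h1, h2] at key
    exact key
  · intro i hi
    rcases Finset.mem_image.mp hi with ⟨k, hk, rfl⟩
    rw [hφ.extend_apply]
    exact hsets k hk

end Aux

section RV

/-- From the normalizing sequence property, `b n → ∞`. -/
lemma b_tendsto_atTop (g : ℝ → ℝ) (hg_pos : ∀ x > 0, 0 < g x)
    (hg_anti : AntitoneOn g (Set.Ioi 0))
    (b : ℕ → ℝ) (hb : ∀ n, 0 < b n)
    (hlim1 : Tendsto (fun n : ℕ => ((n : ℝ) ^ 2 / 2) * g (b n)) atTop (nhds 1)) :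
    Tendsto b atTop atTop := by
  have h2 : Tendsto (fun n : ℕ => 2 / (n : ℝ) ^ 2) atTop (nhds 0) := by
    apply Tendsto.div_atTop tendsto_const_nhds
    have : Tendsto (fun n : ℕ => ((n:ℝ))^2) atTop atTop :=
      (tendsto_pow_atTop (by norm_num)).comp tendsto_natCast_atTop_atTop
    exact this
  have hg0 : Tendsto (fun n : ℕ => g (b n)) atTop (nhds 0) := by
    have := hlim1.mul h2
    rw [mul_zero] at this
    apply this.congr'
    filter_upwards [eventually_ge_atTop 1] with n hn
    have hn' : (0:ℝ) < (n:ℝ)^2 := by positivity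
    field_simp
  rw [tendsto_atTop]
  intro M
  set M' := max M 1 with hM'
  have hM'pos : (0:ℝ) < M' := lt_of_lt_of_le one_pos (le_max_right _ _)
  filter_upwards [hg0.eventually_lt_const (hg_pos M' hM'pos)] with n hn
  by_contra hcon
  push_neg at hcon
  have hbn : b n ≤ M' := le_trans hcon.le (le_max_left _ _)
  have := hg_anti (Set.mem_Ioi.mpr (hb n)) (Set.mem_Ioi.mpr hM'pos) hbn
  linarith

end RV

section RV2

open Real

lemma rv_bounds (g : ℝ → ℝ) (hg_pos : ∀ x > 0, 0 < g x)
    (hg_anti : AntitoneOn g (Set.Ioi 0))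
    (α : ℝ) (hα : 0 < α)
    (b : ℕ → ℝ) (hb : ∀ n, 0 < b n)
    (hlim : ∀ x > 0, Tendsto (fun n : ℕ => ((n : ℝ) ^ 2 / 2) * g (b n * x))
      atTop (nhds (x ^ (-α))))
    (ε : ℝ) (hε : 0 < ε) (hεα : ε < α) :
    ∀ᶠ x : ℝ in atTop, g x ≤ x ^ (-(α - ε)) ∧ x ^ (-(α + ε)) ≤ g x := by
  classical
  set u : ℕ → ℝ := fun n => ((n : ℝ) ^ 2 / 2) * g (b n) with hu_def
  set v : ℕ → ℝ := fun n => ((n : ℝ) ^ 2 / 2) * g (b n * 2) with hv_def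
  have hu : Tendsto u atTop (nhds 1) := by
    have := hlim 1 one_pos
    simpa [Real.one_rpow] using this
  have hv : Tendsto v atTop (nhds ((2:ℝ) ^ (-α))) := hlim 2 two_pos
  have hbtop : Tendsto b atTop atTop := b_tendsto_atTop g hg_pos hg_anti b hb hu
  -- the "index" function M
  have hfin : ∀ x : ℝ, ∃ K : ℕ, ∀ k ≥ K, x < b k := fun x =>
    eventually_atTop.mp (hbtop.eventually_gt_atTop x)
  choose Kf hKf using hfin
  set Mset : ℝ → Finset ℕ := fun x => (Finset.range (Kf x + 1)).filter (fun k => b k ≤ x)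
    with hMset_def
  set M : ℝ → ℕ := fun x => if hx : (Mset x).Nonempty then (Mset x).max' hx else 0 with hM_def
  have hM3 : ∀ x k, b k ≤ x → k ≤ M x := by
    intro x k hk
    have hklt : k < Kf x := by
      by_contra hcon
      push_neg at hcon
      exact absurd hk (not_le.mpr (hKf x k hcon))
    have hkmem : k ∈ Mset x := by
      simp only [hMset_def, Finset.mem_filter, Finset.mem_range]
      exact ⟨by omega, hk⟩
    have hne : (Mset x).Nonempty := ⟨k, hkmem⟩
    rw [hM_def]
    simp only [hne, dif_pos]
    exact Finset.le_max' _ _ hkmem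
  have hM1 : ∀ x, b 0 ≤ x → b (M x) ≤ x := by
    intro x hx
    have hne : (Mset x).Nonempty := by
      refine ⟨0, ?_⟩
      simp only [hMset_def, Finset.mem_filter, Finset.mem_range]
      exact ⟨by omega, hx⟩
    have := (Finset.max'_mem _ hne)
    rw [hM_def]
    simp only [hne, dif_pos]
    have hmem := Finset.max'_mem (Mset x) hne
    simp only [hMset_def, Finset.mem_filter] at hmem
    exact hmem.2
  have hM2 : ∀ x, x < b (M x + 1) := by
    intro x
    by_contra hcon
    push_neg at hcon
    have := hM3 x (M x + 1) hcon
    omega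
  have hMtop : Tendsto M atTop atTop := by
    rw [tendsto_atTop]
    intro N
    filter_upwards [eventually_ge_atTop (b N)] with x hx
    exact hM3 x N hx
  -- ratio (n+1)^2/n^2 → 1
  have hratio : Tendsto (fun n : ℕ => ((n : ℝ) + 1) ^ 2 / (n : ℝ) ^ 2) atTop (nhds 1) := by
    have h0 : Tendsto (fun n : ℕ => 1 + 1 / (n : ℝ)) atTop (nhds 1) := by
      simpa using (tendsto_const_nhds (x := (1:ℝ))).add (tendsto_one_div_atTop_nhds_zero_nat)
    have h1 : Tendsto (fun n : ℕ => (1 + 1 / (n : ℝ)) ^ 2) atTop (nhds 1) := by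
      simpa using h0.pow 2
    apply h1.congr'
    filter_upwards [eventually_ge_atTop 1] with n hn
    have : (0:ℝ) < (n:ℝ) := by exact_mod_cast hn
    field_simp
  set ρp : ℝ := (2:ℝ) ^ (-(α - ε/2)) with hρp_def
  set ρm : ℝ := (2:ℝ) ^ (-(α + ε/2)) with hρm_def
  have hρp_pos : 0 < ρp := Real.rpow_pos_of_pos two_pos _
  have hρm_pos : 0 < ρm := Real.rpow_pos_of_pos two_pos _
  have h2α_lt : (2:ℝ) ^ (-α) < ρp := by
    rw [hρp_def, Real.rpow_lt_rpow_left_iff one_lt_two]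
    linarith
  have hρm_lt : ρm < (2:ℝ) ^ (-α) := by
    rw [hρm_def, Real.rpow_lt_rpow_left_iff one_lt_two]
    linarith
  -- chain inequalities
  have hchain : ∀ᶠ x : ℝ in atTop,
      g (2 * x) ≤ ρp * g x ∧ ρm * g x ≤ g (2 * x) := by
    have hM1top : Tendsto (fun x => M x + 1) atTop atTop :=
      (tendsto_add_atTop_nat 1).comp hMtop
    have A1 : Tendsto (fun x => ρp * u (M x + 1) - v (M x) * (((M x : ℝ) + 1) ^ 2 / (M x : ℝ) ^ 2))
        atTop (nhds (ρp * 1 - (2:ℝ) ^ (-α) * 1)) :=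
      ((hu.comp hM1top).const_mul ρp).sub ((hv.comp hMtop).mul (hratio.comp hMtop))
    have A2 : Tendsto (fun x => v (M x + 1) - ρm * (u (M x) * (((M x : ℝ) + 1) ^ 2 / (M x : ℝ) ^ 2)))
        atTop (nhds ((2:ℝ) ^ (-α) - ρm * (1 * 1))) :=
      (hv.comp hM1top).sub (((hu.comp hMtop).mul (hratio.comp hMtop)).const_mul ρm)
    have hA1pos : (0:ℝ) < ρp * 1 - (2:ℝ) ^ (-α) * 1 := by
      rw [mul_one, mul_one]; linarith
    have hA2pos : (0:ℝ) < (2:ℝ) ^ (-α) - ρm * (1 * 1) := by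
      rw [mul_one, mul_one]; linarith
    filter_upwards [A1.eventually_const_lt hA1pos, A2.eventually_const_lt hA2pos,
      eventually_ge_atTop (b 0), eventually_ge_atTop (b 1), eventually_gt_atTop (0:ℝ),
      hMtop.eventually_ge_atTop 1] with x h1 h2 hb0 hb1 hxpos hM1'
    set m := M x with hm_def
    have hmpos : (0:ℝ) < (m:ℝ) := by exact_mod_cast hM1'
    have hbmx : b m ≤ x := hM1 x hb0
    have hxbm1 : x ≤ b (m + 1) := (hM2 x).le
    have hm1pos : (0:ℝ) < ((m:ℝ) + 1) ^ 2 := by positivity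
    have hgb1 : g (b (m+1)) ≤ g x :=
      hg_anti (Set.mem_Ioi.mpr hxpos) (Set.mem_Ioi.mpr (hb (m+1))) hxbm1
    have hgb0 : g x ≤ g (b m) :=
      hg_anti (Set.mem_Ioi.mpr (hb m)) (Set.mem_Ioi.mpr hxpos) hbmx
    have e_vm : g (b m * 2) = 2 / (m:ℝ)^2 * v m := by
      rw [hv_def]; field_simp
    have e_vm1 : g (b (m+1) * 2) = 2 / ((m:ℝ)+1)^2 * v (m+1) := by
      rw [hv_def]; push_cast; field_simp
    have e_um : g (b m) = 2 / (m:ℝ)^2 * u m := by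
      rw [hu_def]; field_simp
    have e_um1 : g (b (m+1)) = 2 / ((m:ℝ)+1)^2 * u (m+1) := by
      rw [hu_def]; push_cast; field_simp
    constructor
    · -- upper
      have step1 : g (2 * x) ≤ g (2 * b m) := by
        apply hg_anti (Set.mem_Ioi.mpr (mul_pos two_pos (hb m)))
          (Set.mem_Ioi.mpr (by positivity))
        linarith
      have step2 : g (2 * b m) = 2 / (m:ℝ)^2 * v m := by rw [mul_comm]; exact e_vm
      have hvu : v m * (((m:ℝ) + 1) ^ 2 / (m:ℝ) ^ 2) ≤ ρp * u (m + 1) := by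
        push_cast at h1 ⊢; linarith
      have step3 : 2 / (m:ℝ)^2 * v m ≤ ρp * (2 / ((m:ℝ)+1)^2 * u (m+1)) := by
        have heq : 2 / (m:ℝ)^2 * v m
            = 2 / ((m:ℝ)+1)^2 * (v m * (((m:ℝ) + 1) ^ 2 / (m:ℝ) ^ 2)) := by
          field_simp
        rw [heq]
        calc 2 / ((m:ℝ)+1)^2 * (v m * (((m:ℝ) + 1) ^ 2 / (m:ℝ) ^ 2))
            ≤ 2 / ((m:ℝ)+1)^2 * (ρp * u (m+1)) := by
              apply mul_le_mul_of_nonneg_left hvu (by positivity)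
          _ = ρp * (2 / ((m:ℝ)+1)^2 * u (m+1)) := by ring
      calc g (2 * x) ≤ 2 / (m:ℝ)^2 * v m := step2 ▸ step1
        _ ≤ ρp * (2 / ((m:ℝ)+1)^2 * u (m+1)) := step3
        _ = ρp * g (b (m+1)) := by rw [e_um1]
        _ ≤ ρp * g x := mul_le_mul_of_nonneg_left hgb1 hρp_pos.le
    · -- lower
      have step1 : g (2 * b (m+1)) ≤ g (2 * x) := by
        apply hg_anti (Set.mem_Ioi.mpr (by positivity))
          (Set.mem_Ioi.mpr (mul_pos two_pos (hb (m+1))))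
        linarith
      have step2 : g (2 * b (m+1)) = 2 / ((m:ℝ)+1)^2 * v (m+1) := by
        rw [mul_comm]; exact e_vm1
      have hvl : ρm * (u m * (((m:ℝ) + 1) ^ 2 / (m:ℝ) ^ 2)) ≤ v (m+1) := by
        push_cast at h2 ⊢; linarith
      have step3 : ρm * (2 / (m:ℝ)^2 * u m) ≤ 2 / ((m:ℝ)+1)^2 * v (m+1) := by
        have heq : ρm * (2 / (m:ℝ)^2 * u m)
            = 2 / ((m:ℝ)+1)^2 * (ρm * (u m * (((m:ℝ) + 1) ^ 2 / (m:ℝ) ^ 2))) := by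
          field_simp
        rw [heq]
        apply mul_le_mul_of_nonneg_left hvl (by positivity)
      calc ρm * g x ≤ ρm * g (b m) := mul_le_mul_of_nonneg_left hgb0 hρm_pos.le
        _ = ρm * (2 / (m:ℝ)^2 * u m) := by rw [e_um]
        _ ≤ 2 / ((m:ℝ)+1)^2 * v (m+1) := step3
        _ = g (2 * b (m+1)) := step2.symm
        _ ≤ g (2 * x) := step1
  -- extract a threshold
  obtain ⟨x₀, hx₀⟩ := eventually_atTop.mp (hchain.and (eventually_ge_atTop 1))
  have hx₀1 : (1:ℝ) ≤ x₀ := (hx₀ x₀ le_rfl).2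
  have hx₀pos : (0:ℝ) < x₀ := lt_of_lt_of_le one_pos hx₀1
  have hgx₀ : 0 < g x₀ := hg_pos x₀ hx₀pos
  -- iteration
  have hiter : ∀ k : ℕ, g ((2:ℝ)^k * x₀) ≤ ρp^k * g x₀ ∧ ρm^k * g x₀ ≤ g ((2:ℝ)^k * x₀) := by
    intro k
    induction k with
    | zero => simp
    | succ k ih =>
      have h2k : (1:ℝ) ≤ (2:ℝ)^k := one_le_pow₀ (by norm_num)
      have hy : x₀ ≤ (2:ℝ)^k * x₀ := le_mul_of_one_le_left hx₀pos.le h2k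
      have hch := (hx₀ _ hy).1
      constructor
      · calc g ((2:ℝ)^(k+1) * x₀) = g (2 * ((2:ℝ)^k * x₀)) := by ring_nf
          _ ≤ ρp * g ((2:ℝ)^k * x₀) := hch.1
          _ ≤ ρp * (ρp^k * g x₀) := mul_le_mul_of_nonneg_left ih.1 hρp_pos.le
          _ = ρp^(k+1) * g x₀ := by ring
      · calc ρm^(k+1) * g x₀ = ρm * (ρm^k * g x₀) := by ring
          _ ≤ ρm * g ((2:ℝ)^k * x₀) := mul_le_mul_of_nonneg_left ih.2 hρm_pos.le
          _ ≤ g (2 * ((2:ℝ)^k * x₀)) := hch.2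
          _ = g ((2:ℝ)^(k+1) * x₀) := by ring_nf
  set C := g x₀ * (2*x₀) ^ (α - ε/2) with hC_def
  set c₀ := g x₀ * (x₀/2) ^ (α + ε/2) with hc₀_def
  have hc₀pos : 0 < c₀ := mul_pos hgx₀ (Real.rpow_pos_of_pos (by positivity) _)
  have hCev : ∀ᶠ x : ℝ in atTop, C ≤ x ^ (ε/2) :=
    (tendsto_rpow_atTop (by positivity : 0 < ε/2)).eventually_ge_atTop C
  have hc₀ev : ∀ᶠ x : ℝ in atTop, x ^ (-(ε/2)) < c₀ :=
    (tendsto_rpow_neg_atTop (by positivity : 0 < ε/2)).eventually_lt_const hc₀pos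
  filter_upwards [eventually_ge_atTop x₀, hCev, hc₀ev] with x hxx₀ hCx hc₀x
  have hxpos : 0 < x := lt_of_lt_of_le hx₀pos hxx₀
  have hx1 : (1:ℝ) ≤ x / x₀ := (one_le_div hx₀pos).mpr hxx₀
  set k := ⌊Real.logb 2 (x/x₀)⌋₊ with hk_def
  have hlog0 : 0 ≤ Real.logb 2 (x/x₀) := Real.logb_nonneg one_lt_two hx1
  have h2k_le : (2:ℝ)^k ≤ x / x₀ := by
    have h1 : ((2:ℝ))^(k:ℝ) ≤ (2:ℝ) ^ Real.logb 2 (x/x₀) :=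
      Real.rpow_le_rpow_of_exponent_le one_le_two (Nat.floor_le hlog0)
    rwa [Real.rpow_natCast, Real.rpow_logb two_pos (by norm_num) (by positivity)] at h1
  have h2k1_gt : x / x₀ < (2:ℝ)^(k+1) := by
    have h1 : (2:ℝ) ^ Real.logb 2 (x/x₀) < (2:ℝ)^((k:ℝ)+1) := by
      apply Real.rpow_lt_rpow_of_exponent_lt one_lt_two
      rw [hk_def]
      push_cast
      exact Nat.lt_floor_add_one _
    rw [Real.rpow_logb two_pos (by norm_num) (by positivity)] at h1
    rw [show ((k:ℝ)+1) = ((k+1:ℕ):ℝ) by push_cast; ring, Real.rpow_natCast] at h1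
    exact h1
  have h2kx : (2:ℝ)^k * x₀ ≤ x := by
    rw [← le_div_iff₀ hx₀pos]
    exact h2k_le
  have hxk1 : x ≤ (2:ℝ)^(k+1) * x₀ := by
    rw [← div_le_iff₀ hx₀pos]
    exact h2k1_gt.le
  have h2kpos : (0:ℝ) < (2:ℝ)^k := by positivity
  constructor
  · -- upper bound
    have hgle : g x ≤ ρp^k * g x₀ := by
      refine le_trans ?_ (hiter k).1
      exact hg_anti (Set.mem_Ioi.mpr (by positivity)) (Set.mem_Ioi.mpr hxpos) h2kx
    have hρpk : ρp^k = ((2:ℝ)^k) ^ (-(α - ε/2)) := by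
      rw [hρp_def, ← Real.rpow_natCast ((2:ℝ) ^ (-(α - ε/2))) k,
        ← Real.rpow_natCast (2:ℝ) k, ← Real.rpow_mul (by norm_num),
        ← Real.rpow_mul (by norm_num)]
      ring_nf
    have hbase : x / (2*x₀) ≤ (2:ℝ)^k := by
      rw [div_le_iff₀ (by positivity)]
      calc x ≤ (2:ℝ)^(k+1) * x₀ := hxk1
        _ = (2:ℝ)^k * (2*x₀) := by ring
    have hρpk_le : ρp^k ≤ (x / (2*x₀)) ^ (-(α - ε/2)) := by
      rw [hρpk]
      exact Real.rpow_le_rpow_of_nonpos (by positivity) hbase (by linarith)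
    have hsplit : (x / (2*x₀)) ^ (-(α - ε/2)) = x ^ (-(α - ε/2)) * (2*x₀) ^ (α - ε/2) := by
      rw [Real.div_rpow hxpos.le (by positivity : (0:ℝ) ≤ 2*x₀), div_eq_mul_inv,
        ← Real.rpow_neg (by positivity : (0:ℝ) ≤ 2*x₀), neg_neg]
    have hmain : g x ≤ C * x ^ (-(α - ε/2)) := by
      calc g x ≤ ρp^k * g x₀ := hgle
        _ ≤ (x / (2*x₀)) ^ (-(α - ε/2)) * g x₀ :=
            mul_le_mul_of_nonneg_right hρpk_le hgx₀.le
        _ = C * x ^ (-(α - ε/2)) := by rw [hsplit, hC_def]; ring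
    have hfin2 : C * x ^ (-(α - ε/2)) ≤ x ^ (-(α - ε)) := by
      have : x ^ (-(α - ε)) = x ^ (ε/2) * x ^ (-(α - ε/2)) := by
        rw [← Real.rpow_add hxpos]
        congr 1
        ring
      rw [this]
      exact mul_le_mul_of_nonneg_right hCx (Real.rpow_nonneg hxpos.le _)
    exact le_trans hmain hfin2
  · -- lower bound
    have hgge : ρm^(k+1) * g x₀ ≤ g x := by
      refine le_trans (hiter (k+1)).2 ?_
      exact hg_anti (Set.mem_Ioi.mpr hxpos) (Set.mem_Ioi.mpr (by positivity)) hxk1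
    have hρmk : ρm^(k+1) = ((2:ℝ)^(k+1)) ^ (-(α + ε/2)) := by
      rw [hρm_def, ← Real.rpow_natCast ((2:ℝ) ^ (-(α + ε/2))) (k+1),
        ← Real.rpow_natCast (2:ℝ) (k+1), ← Real.rpow_mul (by norm_num),
        ← Real.rpow_mul (by norm_num)]
      ring_nf
    have hbase2 : (2:ℝ)^(k+1) ≤ 2 * x / x₀ := by
      have : (2:ℝ)^(k+1) = 2 * (2:ℝ)^k := by ring
      rw [this]
      rw [mul_div_assoc]
      exact mul_le_mul_of_nonneg_left h2k_le (by norm_num)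
    have hρmk_ge : (2 * x / x₀) ^ (-(α + ε/2)) ≤ ρm^(k+1) := by
      rw [hρmk]
      exact Real.rpow_le_rpow_of_nonpos (by positivity) hbase2 (by linarith)
    have hsplit2 : (2 * x / x₀) ^ (-(α + ε/2)) = x ^ (-(α + ε/2)) * (x₀/2) ^ (α + ε/2) := by
      have h1 : 2 * x / x₀ = x / (x₀ / 2) := by
        field_simp
      rw [h1, Real.div_rpow hxpos.le (by positivity : (0:ℝ) ≤ x₀/2), div_eq_mul_inv,
        ← Real.rpow_neg (by positivity : (0:ℝ) ≤ x₀/2), neg_neg]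
    have hmain : c₀ * x ^ (-(α + ε/2)) ≤ g x := by
      calc c₀ * x ^ (-(α + ε/2)) = (2 * x / x₀) ^ (-(α + ε/2)) * g x₀ := by
            rw [hsplit2, hc₀_def]; ring
        _ ≤ ρm^(k+1) * g x₀ := mul_le_mul_of_nonneg_right hρmk_ge hgx₀.le
        _ ≤ g x := hgge
    have hfin2 : x ^ (-(α + ε)) ≤ c₀ * x ^ (-(α + ε/2)) := by
      have : x ^ (-(α + ε)) = x ^ (-(ε/2)) * x ^ (-(α + ε/2)) := by
        rw [← Real.rpow_add hxpos]
        congr 1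
        ring
      rw [this]
      exact mul_le_mul_of_nonneg_right hc₀x.le (Real.rpow_nonneg hxpos.le _)
    exact le_trans hfin2 hmain

end RV2

section Chernoff

open Real

variable {Ω : Type*} [MeasurableSpace Ω]

lemma exp_le_one_add {u : ℝ} (h0 : 0 ≤ u) (h1 : u ≤ 1) :
    Real.exp u ≤ 1 + (Real.exp 1 - 1) * u := by
  have key := convexOn_exp.2 (Set.mem_univ (0:ℝ)) (Set.mem_univ (1:ℝ))
    (by linarith : 0 ≤ 1 - u) h0 (by ring)
  simp only [smul_eq_mul, mul_zero, mul_one, Real.exp_zero, add_zero, zero_add] at key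
  nlinarith [key]

lemma truncated_moment (μ : Measure Ω) [IsProbabilityMeasure μ]
    (W : Ω → ℝ) (hW : Measurable W) (hWnn : ∀ ω, 0 ≤ W ω)
    (T x₁ α₀ : ℝ) (hx₁ : 1 ≤ x₁) (hx₁T : x₁ ≤ T) (hα₀ : 0 < α₀) (hα₀1 : α₀ < 1)
    (hWle : ∀ ω, W ω ≤ T)
    (htailW : ∀ t, x₁ < t → (μ {ω | t ≤ W ω}).toReal ≤ 2 * t ^ (-α₀)) :
    ∫ ω, W ω ∂μ ≤ x₁ + 2 * T ^ (1 - α₀) / (1 - α₀) := by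
  have hx₁0 : (0:ℝ) < x₁ := lt_of_lt_of_le one_pos hx₁
  have hWint : Integrable W μ := by
    refine Integrable.mono' (integrable_const T) hW.aestronglyMeasurable ?_
    exact Filter.Eventually.of_forall fun ω => by
      rw [Real.norm_eq_abs, abs_of_nonneg (hWnn ω)]; exact hWle ω
  have key := hWint.integral_eq_integral_Ioc_meas_le (M := T)
    (Filter.Eventually.of_forall hWnn) (Filter.Eventually.of_forall hWle)
  set F : ℝ → ℝ := fun t => (μ {ω | t ≤ W ω}).toReal with hF_def
  have hFanti : Antitone F := by
    intro s t hst
    apply ENNReal.toReal_mono (measure_ne_top μ _)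
    exact measure_mono (fun ω hω => le_trans hst hω)
  have hFmeas : Measurable F := hFanti.measurable
  have hFle1 : ∀ t, F t ≤ 1 := by
    intro t
    have h1 : μ {ω | t ≤ W ω} ≤ 1 := prob_le_one
    calc F t ≤ (1:ℝ≥0∞).toReal := ENNReal.toReal_mono ENNReal.one_ne_top h1
      _ = 1 := by simp
  have hFnn : ∀ t, 0 ≤ F t := fun t => ENNReal.toReal_nonneg
  have hFint : ∀ p q : ℝ, IntegrableOn F (Set.Ioc p q) volume := by
    intro p q
    have hc : IntegrableOn (fun _ : ℝ => (1:ℝ)) (Set.Ioc p q) volume := by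
      rw [integrableOn_const_iff]
      exact Or.inr measure_Ioc_lt_top
    refine Integrable.mono' hc hFmeas.aestronglyMeasurable ?_
    exact Filter.Eventually.of_forall fun t => by
      rw [Real.norm_eq_abs, abs_of_nonneg (hFnn t)]; exact hFle1 t
  have hsplit : Set.Ioc (0:ℝ) T = Set.Ioc 0 x₁ ∪ Set.Ioc x₁ T :=
    (Set.Ioc_union_Ioc_eq_Ioc hx₁0.le hx₁T).symm
  have hdisj : Disjoint (Set.Ioc (0:ℝ) x₁) (Set.Ioc x₁ T) := Set.Ioc_disjoint_Ioc_of_le le_rfl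
  have hsum : ∫ t in Set.Ioc (0:ℝ) T, F t = (∫ t in Set.Ioc (0:ℝ) x₁, F t)
      + ∫ t in Set.Ioc x₁ T, F t := by
    rw [hsplit]
    exact setIntegral_union hdisj measurableSet_Ioc (hFint 0 x₁) (hFint x₁ T)
  have hbound1 : ∫ t in Set.Ioc (0:ℝ) x₁, F t ≤ x₁ := by
    have h1 : ∫ t in Set.Ioc (0:ℝ) x₁, F t ≤ ∫ _t in Set.Ioc (0:ℝ) x₁, (1:ℝ) := by
      apply setIntegral_mono_on (hFint 0 x₁) _ measurableSet_Ioc (fun t _ => hFle1 t)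
      rw [integrableOn_const_iff]
      exact Or.inr measure_Ioc_lt_top
    have h2 : ∫ _t in Set.Ioc (0:ℝ) x₁, (1:ℝ) = x₁ := by
      simp [Measure.real, Real.volume_Ioc, ENNReal.toReal_ofReal hx₁0.le]
    linarith
  have hrpow_int : IntegrableOn (fun t : ℝ => 2 * t ^ (-α₀)) (Set.Ioc x₁ T) volume := by
    have hcont : ContinuousOn (fun t : ℝ => 2 * t ^ (-α₀)) (Set.Icc x₁ T) := by
      apply continuousOn_const.mul
      apply ContinuousOn.rpow_const continuousOn_id
      intro t ht
      exact Or.inl (ne_of_gt (lt_of_lt_of_le hx₁0 ht.1))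
    exact (hcont.integrableOn_Icc).mono_set Set.Ioc_subset_Icc_self
  have hbound2 : ∫ t in Set.Ioc x₁ T, F t ≤ 2 * T ^ (1 - α₀) / (1 - α₀) := by
    have h1 : ∫ t in Set.Ioc x₁ T, F t ≤ ∫ t in Set.Ioc x₁ T, 2 * t ^ (-α₀) := by
      apply setIntegral_mono_on (hFint x₁ T) hrpow_int measurableSet_Ioc
      intro t ht
      exact htailW t ht.1
    have h2 : ∫ t in Set.Ioc x₁ T, 2 * t ^ (-α₀) = 2 * ((T ^ (-α₀+1) - x₁ ^ (-α₀+1))/(-α₀+1)) := by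
      rw [← intervalIntegral.integral_of_le hx₁T]
      rw [intervalIntegral.integral_const_mul]
      rw [integral_rpow (Or.inl (by linarith : (-1:ℝ) < -α₀))]
    have h3 : 2 * ((T ^ (-α₀+1) - x₁ ^ (-α₀+1))/(-α₀+1)) ≤ 2 * T ^ (1-α₀) / (1-α₀) := by
      have he : -α₀ + 1 = 1 - α₀ := by ring
      rw [he]
      have h1α₀ : (0:ℝ) < 1 - α₀ := by linarith
      have h5 : (T ^ (1-α₀) - x₁ ^ (1-α₀)) / (1-α₀) ≤ T ^ (1-α₀) / (1-α₀) := by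
        gcongr
        linarith [Real.rpow_nonneg (le_trans zero_le_one hx₁) (1-α₀)]
      calc 2 * ((T ^ (1-α₀) - x₁ ^ (1-α₀))/(1-α₀)) ≤ 2 * (T ^ (1-α₀) / (1-α₀)) := by linarith
        _ = 2 * T ^ (1-α₀) / (1-α₀) := by ring

    linarith
  rw [key]
  change (∫ t in Set.Ioc (0:ℝ) T, F t) ≤ _
  rw [hsum]
  linarith

end Chernoff

section Chernoff2

open Real

variable {Ω : Type*} [MeasurableSpace Ω]

lemma chernoff_row (μ : Measure Ω) [IsProbabilityMeasure μ]
    {n : ℕ} (Z : Fin n → Ω → ℝ) (hmeas : ∀ j, Measurable (Z j))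
    (hind : iIndepFun Z μ) (hZnn : ∀ j ω, 0 ≤ Z j ω)
    (T B E1 : ℝ) (hT : 0 < T) (hB : 0 < B) (hZle : ∀ j ω, Z j ω ≤ T)
    (hEY : ∀ j, ∫ ω, Z j ω ∂μ ≤ E1) (hE1 : 0 ≤ E1)
    (hcond : (Real.exp 1 - 1) * (n * E1) ≤ B / 2) :
    (μ {ω | B ≤ ∑ j, Z j ω}).toReal ≤ Real.exp (-(B / (2 * T))) := by
  classical
  set t : ℝ := 1 / T with ht_def
  have ht : 0 ≤ t := by positivity
  set c : ℝ := Real.exp 1 - 1 with hc_def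
  have hc : 0 ≤ c := by
    have := Real.exp_one_gt_d9
    rw [hc_def]; linarith
  set S : Ω → ℝ := ∑ j, Z j with hS_def
  have hSapp : ∀ ω, S ω = ∑ j, Z j ω := fun ω => by rw [hS_def]; simp [Finset.sum_apply]
  have hSmeas : Measurable S := by
    have he : S = fun ω => ∑ j, Z j ω := funext hSapp
    rw [he]
    exact Finset.measurable_sum _ (fun j _ => hmeas j)
  have hSle : ∀ ω, S ω ≤ n * T := by
    intro ω
    calc S ω = ∑ j, Z j ω := hSapp ω
      _ ≤ ∑ _j : Fin n, T := Finset.sum_le_sum (fun j _ => hZle j ω)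
      _ = n * T := by simp [mul_comm]
  have hint : Integrable (fun ω => Real.exp (t * S ω)) μ := by
    refine Integrable.mono' (integrable_const (Real.exp (t * (n * T))))
      ((hSmeas.const_mul t).exp.aestronglyMeasurable) ?_
    refine Filter.Eventually.of_forall fun ω => ?_
    rw [Real.norm_eq_abs, abs_of_nonneg (Real.exp_nonneg _)]
    exact Real.exp_le_exp.mpr (mul_le_mul_of_nonneg_left (hSle ω) ht)
  have chern := measure_ge_le_exp_mul_mgf (μ := μ) (X := S) B ht hint
  -- bound each factor
  have hfac : ∀ j : Fin n, mgf (Z j) μ t ≤ Real.exp (c * t * E1) := by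
    intro j
    have hZint : Integrable (Z j) μ := by
      refine Integrable.mono' (integrable_const T) (hmeas j).aestronglyMeasurable ?_
      exact Filter.Eventually.of_forall fun ω => by
        rw [Real.norm_eq_abs, abs_of_nonneg (hZnn j ω)]; exact hZle j ω
    have hptwise : ∀ ω, Real.exp (t * Z j ω) ≤ 1 + c * t * Z j ω := by
      intro ω
      have h0 : 0 ≤ t * Z j ω := mul_nonneg ht (hZnn j ω)
      have h1 : t * Z j ω ≤ 1 := by
        rw [ht_def]
        rw [div_mul_eq_mul_div, div_le_one hT]
        simpa using hZle j ω
      have := exp_le_one_add h0 h1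
      calc Real.exp (t * Z j ω) ≤ 1 + c * (t * Z j ω) := by rw [hc_def]; exact this
        _ = 1 + c * t * Z j ω := by ring
    have hexpint : Integrable (fun ω => Real.exp (t * Z j ω)) μ := by
      refine Integrable.mono' (integrable_const (Real.exp (t * T)))
        (((hmeas j).const_mul t).exp.aestronglyMeasurable) ?_
      refine Filter.Eventually.of_forall fun ω => ?_
      rw [Real.norm_eq_abs, abs_of_nonneg (Real.exp_nonneg _)]
      exact Real.exp_le_exp.mpr (mul_le_mul_of_nonneg_left (hZle j ω) ht)
    have hlinint : Integrable (fun ω => 1 + c * t * Z j ω) μ :=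
      (integrable_const 1).add (hZint.const_mul _)
    have h2 : mgf (Z j) μ t ≤ ∫ ω, (1 + c * t * Z j ω) ∂μ := by
      rw [mgf]
      exact integral_mono hexpint hlinint hptwise
    have h3 : ∫ ω, (1 + c * t * Z j ω) ∂μ = 1 + c * t * ∫ ω, Z j ω ∂μ := by
      rw [integral_add (integrable_const 1) (hZint.const_mul _), integral_const]
      have hsm : ∫ ω, c * t * Z j ω ∂μ = c * t * ∫ ω, Z j ω ∂μ := by
        simpa using integral_smul (c * t) (Z j)
      rw [hsm]
      simp
    have h4 : 1 + c * t * ∫ ω, Z j ω ∂μ ≤ 1 + c * t * E1 := by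
      have : c * t * ∫ ω, Z j ω ∂μ ≤ c * t * E1 :=
        mul_le_mul_of_nonneg_left (hEY j) (mul_nonneg hc ht)
      linarith
    have h5 : 1 + c * t * E1 ≤ Real.exp (c * t * E1) := by
      have := Real.add_one_le_exp (c * t * E1)
      linarith
    calc mgf (Z j) μ t ≤ 1 + c * t * E1 := by linarith [h2, h3.le, h4]
      _ ≤ Real.exp (c * t * E1) := h5
  have hmgf_sum : mgf S μ t = ∏ j, mgf (Z j) μ t := by
    rw [hS_def]
    exact hind.mgf_sum hmeas Finset.univ
  have hprod : (∏ j, mgf (Z j) μ t) ≤ Real.exp (c * t * E1) ^ n := by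
    calc (∏ j, mgf (Z j) μ t) ≤ ∏ _j : Fin n, Real.exp (c * t * E1) :=
        Finset.prod_le_prod (fun j _ => mgf_nonneg) (fun j _ => hfac j)
      _ = Real.exp (c * t * E1) ^ n := by simp
  have hexp_pow : Real.exp (c * t * E1) ^ n = Real.exp (n * (c * t * E1)) :=
    (Real.exp_nat_mul _ n).symm
  have hfinal1 : (μ {ω | B ≤ S ω}).toReal ≤ Real.exp (-t * B) * Real.exp (n * (c * t * E1)) := by
    calc (μ {ω | B ≤ S ω}).toReal ≤ Real.exp (-t * B) * mgf S μ t := chern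
      _ ≤ Real.exp (-t * B) * Real.exp (n * (c * t * E1)) := by
        apply mul_le_mul_of_nonneg_left _ (Real.exp_nonneg _)
        rw [hmgf_sum, ← hexp_pow]
        exact hprod
  have hexpo : -t * B + n * (c * t * E1) ≤ -(B / (2 * T)) := by
    rw [ht_def]
    have h6 : (n:ℝ) * (c * (1/T) * E1) = (c * (n * E1)) / T := by ring
    have h7 : c * (n * E1) / T ≤ (B/2) / T := by
      have := hcond
      gcongr

    have h8 : -(1/T) * B + (n:ℝ) * (c * (1/T) * E1) ≤ -(B/T) + (B/2)/T := by
      have h9 : (n:ℝ) * (c * (1/T) * E1) ≤ (B/2)/T := by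
        calc (n:ℝ) * (c * (1/T) * E1) = c * ((n:ℝ) * E1) / T := by ring
          _ ≤ (B/2)/T := h7
      have h10 : -(1/T) * B = -(B/T) := by ring
      linarith
    have h11 : -(B/T) + (B/2)/T = -(B / (2*T)) := by
      field_simp
      ring
    linarith
  have hset : {ω | B ≤ ∑ j, Z j ω} = {ω | B ≤ S ω} := by
    ext ω
    simp [hSapp]
  rw [hset]
  calc (μ {ω | B ≤ S ω}).toReal ≤ Real.exp (-t * B) * Real.exp (n * (c * t * E1)) := hfinal1
    _ = Real.exp (-t * B + n * (c * t * E1)) := (Real.exp_add _ _).symm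
    _ ≤ Real.exp (-(B / (2 * T))) := Real.exp_le_exp.mpr hexpo

end Chernoff2

section SortSec

def sortPair {n : ℕ} (i j : Fin n) : {q : Fin n × Fin n // q.1 ≤ q.2} :=
  if h : i ≤ j then ⟨(i, j), h⟩ else ⟨(j, i), le_of_not_ge h⟩

lemma sortPair_right_inj {n : ℕ} (i : Fin n) : Function.Injective (fun j => sortPair i j) := by
  intro j j' heq
  by_cases h1 : i ≤ j <;> by_cases h2 : i ≤ j' <;>
    simp only [sortPair, h1, h2, dif_pos, dif_neg, not_false_iff, Subtype.mk.injEq,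
      Prod.mk.injEq] at heq
  · exact heq.2
  · exact absurd (heq.1 ▸ le_refl i) h2
  · exact absurd heq.1.ge h1
  · exact heq.1

end SortSec

set_option maxHeartbeats 1000000 in
/-- the probability that some row has both its maximal absolute
entry and the sum of the remaining absolute entries exceeding `bₙ^{3/4 + α/8}`
tends to `0`. -/
theorem stmt_13 {Ω : Type*} [MeasurableSpace Ω] (μ : Measure Ω) [IsProbabilityMeasure μ]
    (a : (n : ℕ) → Fin n → Fin n → Ω → ℝ)
    (hmeas : ∀ n i j, Measurable (a n i j))
    (hsymm : ∀ n (i j : Fin n) ω, a n i j ω = a n j i ω)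
    (hindep : ∀ n, iIndepFun
      (fun q : {q : Fin n × Fin n // q.1 ≤ q.2} => a n q.1.1 q.1.2) μ)
    (α : ℝ) (hα : 0 < α) (hα2 : α < 2)
    (h : ℝ → ℝ) (hpos : ∀ x > 0, 0 < h x)
    (hslow : ∀ t > 0, Tendsto (fun x : ℝ => h (t * x) / h x) atTop (nhds 1))
    (htail : ∀ n (i j : Fin n), i ≤ j → ∀ x : ℝ, 0 < x →
      μ {ω | x < |a n i j ω|} = ENNReal.ofReal (h x / x ^ α))
    (b : ℕ → ℝ) (hb : ∀ n, 0 < b n)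
    (hbn : ∀ x > 0, Tendsto
      (fun n : ℕ => ((n : ℝ) ^ 2 / 2) * (h (b n * x) / (b n * x) ^ α))
      atTop (nhds (x ^ (-α)))) :
    Tendsto (fun n : ℕ =>
        μ {ω | ∃ i j₀ : Fin n, (∀ j : Fin n, |a n i j ω| ≤ |a n i j₀ ω|) ∧
          b n ^ ((3 : ℝ) / 4 + α / 8) < |a n i j₀ ω| ∧
          b n ^ ((3 : ℝ) / 4 + α / 8) < (∑ j : Fin n, |a n i j ω|) - |a n i j₀ ω|})
      atTop (nhds 0) := by
  classical
  -- basic constants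
  set βe : ℝ := 3/4 + α/8 with hβe_def
  set δe : ℝ := α/16 with hδe_def
  set εe : ℝ := α^2*(2-α)/100 with hεe_def
  set Qe : ℝ := 3/4 - 3*α/8 with hQe_def
  set αz : ℝ := min (α - εe) (1 - Qe/2) with hαz_def
  have hεpos : 0 < εe := by
    rw [hεe_def]
    have h1 : 0 < α^2 := by positivity
    nlinarith [mul_pos h1 (sub_pos.mpr hα2)]
  have hεsmall : εe ≤ α/100 := by rw [hεe_def]; nlinarith [sq_nonneg (α-1)]
  have hεα : εe < α := lt_of_le_of_lt hεsmall (by linarith)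
  have hQpos : 0 < Qe := by rw [hQe_def]; linarith
  have hQle : Qe ≤ 3/4 := by rw [hQe_def]; linarith
  have hαzpos : 0 < αz := by
    apply lt_min (by linarith)
    linarith
  have hαzle1 : αz ≤ 1 - Qe/2 := min_le_right _ _
  have hαzle : αz ≤ α - εe := min_le_left _ _
  have hαzlt1 : αz < 1 := lt_of_le_of_lt hαzle1 (by linarith)
  have hβδpos : 0 < βe - δe := by rw [hβe_def, hδe_def]; linarith
  have hδpos : 0 < δe := by rw [hδe_def]; linarith
  have hβpos : 0 < βe := by rw [hβe_def]; linarith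
  -- the tail function
  set g : ℝ → ℝ := fun x => h x / x ^ α with hg_def
  have htail' : ∀ (n : ℕ) (i j : Fin n) (x : ℝ), 0 < x →
      μ {ω | x < |a n i j ω|} = ENNReal.ofReal (g x) := by
    intro n i j x hx
    rcases le_total i j with hij | hij
    · exact htail n i j hij x hx
    · have hset : {ω | x < |a n i j ω|} = {ω | x < |a n j i ω|} := by
        ext ω
        rw [Set.mem_setOf_eq, Set.mem_setOf_eq, hsymm n i j ω]
      rw [hset]
      exact htail n j i hij x hx
  have hgpos : ∀ x > 0, 0 < g x := fun x hx =>
    div_pos (hpos x hx) (Real.rpow_pos_of_pos hx α)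
  have hgnn : ∀ x, 0 < x → 0 ≤ g x := fun x hx => (hgpos x hx).le
  have hganti : AntitoneOn g (Set.Ioi 0) := by
    intro x hx y hy hxy
    have e1 := htail' 1 0 0 x (Set.mem_Ioi.mp hx)
    have e2 := htail' 1 0 0 y (Set.mem_Ioi.mp hy)
    have hsub : {ω | y < |a 1 0 0 ω|} ⊆ {ω | x < |a 1 0 0 ω|} :=
      fun ω hω => lt_of_le_of_lt hxy hω
    have hmono := measure_mono (μ := μ) hsub
    rw [e1, e2] at hmono
    exact (ENNReal.ofReal_le_ofReal_iff (hgnn x (Set.mem_Ioi.mp hx))).mp hmono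
  have hlimg : ∀ x > 0, Tendsto (fun n : ℕ => ((n:ℝ)^2/2) * g (b n * x)) atTop
      (nhds (x ^ (-α))) := fun x hx => hbn x hx
  have hu1 : Tendsto (fun n : ℕ => ((n:ℝ)^2/2) * g (b n)) atTop (nhds 1) := by
    have := hlimg 1 one_pos
    simpa [Real.one_rpow] using this
  have hbtop : Tendsto b atTop atTop := b_tendsto_atTop g hgpos hganti b hb hu1
  have hrv := rv_bounds g hgpos hganti α hα b hb hlimg εe hεpos hεα
  obtain ⟨X₀', hX₀'⟩ := eventually_atTop.mp hrv
  set X₀ : ℝ := max X₀' 1 with hX₀_def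
  have hX₀ : ∀ x, X₀ ≤ x → g x ≤ x ^ (-(α - εe)) ∧ x ^ (-(α+εe)) ≤ g x :=
    fun x hx => hX₀' x (le_trans (le_max_left _ _) hx)
  have hX₀1 : (1:ℝ) ≤ X₀ := le_max_right _ _
  set x₁ : ℝ := 2 * X₀ with hx₁_def
  have hx₁1 : (1:ℝ) ≤ x₁ := by rw [hx₁_def]; linarith
  -- per-n quantities
  set BB : ℕ → ℝ := fun n => b n ^ βe with hBB_def
  set TT : ℕ → ℝ := fun n => b n ^ (βe - δe) with hTT_def
  set EE : ℕ → ℝ := fun n => x₁ + 2 * (TT n) ^ (1 - αz) / (1 - αz) with hEE_def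
  have hBBpos : ∀ n, 0 < BB n := fun n => Real.rpow_pos_of_pos (hb n) _
  have hTTpos : ∀ n, 0 < TT n := fun n => Real.rpow_pos_of_pos (hb n) _
  set r : ℕ → ℝ := fun n =>
    (n:ℝ)^3 * (g (BB n) * g (TT n)) + (n:ℝ) * Real.exp (-(b n ^ δe)/2) with hr_def
  -- n vs b n comparisons
  have hnb : ∀ᶠ n : ℕ in atTop,
      (n:ℝ) ≤ 2 * b n ^ ((α + εe)/2) ∧ b n ^ (α - εe) ≤ (n:ℝ)^2 := by
    filter_upwards [hu1.eventually_const_lt (by norm_num : (1:ℝ)/2 < 1),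
      hu1.eventually_lt_const (by norm_num : (1:ℝ) < 2),
      hbtop.eventually_ge_atTop X₀] with n hlo hhi hbX
    have hbpos := hb n
    have hgb_le : g (b n) ≤ (b n) ^ (-(α - εe)) := (hX₀ _ hbX).1
    have hgb_ge : (b n) ^ (-(α+εe)) ≤ g (b n) := (hX₀ _ hbX).2
    have hbp1 : 0 < (b n) ^ (α - εe) := Real.rpow_pos_of_pos hbpos _
    have hbp2 : 0 < (b n) ^ (α + εe) := Real.rpow_pos_of_pos hbpos _
    constructor
    · -- n ≤ 2 b^((α+ε)/2)
      have h1 : ((n:ℝ)^2/2) * (b n) ^ (-(α+εe)) < 2 := by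
        calc ((n:ℝ)^2/2) * (b n) ^ (-(α+εe)) ≤ ((n:ℝ)^2/2) * g (b n) :=
            mul_le_mul_of_nonneg_left hgb_ge (by positivity)
          _ < 2 := hhi
      rw [Real.rpow_neg hbpos.le] at h1
      have h2 : (n:ℝ)^2 < 4 * (b n) ^ (α + εe) := by
        have hinv : (b n) ^ (α+εe) * ((b n) ^ (α+εe))⁻¹ = 1 := mul_inv_cancel₀ (ne_of_gt hbp2)
        nlinarith [h1, hbp2]
      have hsq : (2 * b n ^ ((α + εe)/2))^2 = 4 * (b n) ^ (α + εe) := by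
        rw [mul_pow, ← Real.rpow_natCast (b n ^ ((α+εe)/2)) 2, ← Real.rpow_mul hbpos.le]
        norm_num
      nlinarith [h2, hsq, Real.rpow_pos_of_pos hbpos ((α + εe)/2), Nat.cast_nonneg (α := ℝ) n]
    · -- b^(α-ε) ≤ n²
      have h1 : 1/2 < ((n:ℝ)^2/2) * ((b n) ^ (α - εe))⁻¹ := by
        rw [← Real.rpow_neg hbpos.le]
        calc (1:ℝ)/2 < ((n:ℝ)^2/2) * g (b n) := hlo
          _ ≤ ((n:ℝ)^2/2) * (b n) ^ (-(α - εe)) :=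
            mul_le_mul_of_nonneg_left hgb_le (by positivity)
      have hinv : (b n) ^ (α-εe) * ((b n) ^ (α-εe))⁻¹ = 1 := mul_inv_cancel₀ (ne_of_gt hbp1)
      nlinarith [h1, hbp1]
  -- the exponent for the A-part
  set eA : ℝ := 3*(α+εe)/2 - (2*βe - δe)*(α - εe) with heA_def
  have heAneg : eA < 0 := by
    rw [heA_def, hβe_def, hδe_def]
    nlinarith [hεsmall, hεpos, hα, hα2]
  -- κ for the Chernoff condition
  set κ : ℝ := min (Qe - εe/2) (δe + (βe - δe) * αz - (α+εe)/2) with hκ_def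
  have hκ1 : 0 < Qe - εe/2 := by
    rw [hQe_def, hεe_def]
    have hsq : α^2 < 4 := by nlinarith
    nlinarith [mul_pos (sub_pos.mpr hα2) (show (0:ℝ) < 3/8 - α^2/200 by nlinarith)]
  have hκ2 : 0 < δe + (βe - δe) * αz - (α+εe)/2 := by
    rcases min_cases (α - εe) (1 - Qe/2) with ⟨heq, _⟩ | ⟨heq, _⟩
    · rw [hαz_def, heq, hβe_def, hδe_def]
      nlinarith [hεsmall, hεpos, hα, hα2]
    · rw [hαz_def, heq, hQe_def, hβe_def, hδe_def, hεe_def]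
      nlinarith [hα, hα2, sq_nonneg α, mul_pos hα (sub_pos.mpr hα2)]
  have hκpos : 0 < κ := lt_min hκ1 hκ2
  have hκQ : κ ≤ Qe - εe/2 := min_le_left _ _
  have hκ2' : κ ≤ δe + (βe - δe) * αz - (α+εe)/2 := min_le_right _ _
  -- the Chernoff condition, eventually
  have hQβ : Qe = βe - α/2 := by rw [hQe_def, hβe_def]; ring
  have hEV2 : ∀ᶠ n : ℕ in atTop,
      (Real.exp 1 - 1) * ((n:ℝ) * EE n) ≤ BB n / 2 := by
    set c : ℝ := Real.exp 1 - 1 with hc_def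
    have hc0 : 0 < c := by
      have := Real.exp_one_gt_d9
      rw [hc_def]; linarith
    have h1αz : 0 < 1 - αz := by linarith
    have hx₁0 : 0 < x₁ := lt_of_lt_of_le one_pos hx₁1
    set K1 : ℝ := c * (2*x₁ + 4/(1-αz)) with hK1_def
    have hK1pos : 0 < K1 := by
      rw [hK1_def]; positivity
    have hbκ : ∀ᶠ n : ℕ in atTop, 2*K1 ≤ b n ^ κ :=
      ((tendsto_rpow_atTop hκpos).comp hbtop).eventually_ge_atTop (2*K1)
    filter_upwards [hnb, hbκ, hbtop.eventually_ge_atTop 1] with n hn2 hκn hb1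
    obtain ⟨hnle, -⟩ := hn2
    have hbpos := hb n
    have hEEnn : 0 ≤ EE n := by
      rw [hEE_def]
      have h2 : 0 ≤ 2 * (TT n) ^ (1 - αz) / (1 - αz) :=
        div_nonneg (by positivity) h1αz.le
      linarith
    have hTTe : (TT n) ^ (1 - αz) = b n ^ ((βe - δe)*(1-αz)) := by
      simp only [hTT_def]
      rw [← Real.rpow_mul hbpos.le]
    have he1 : (α+εe)/2 ≤ βe - κ := by linarith
    have he2 : (α+εe)/2 + (βe-δe)*(1-αz) ≤ βe - κ := by
      have hring : (βe-δe)*(1-αz) = (βe-δe) - (βe-δe)*αz := by ring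
      linarith
    have hmono1 : b n ^ ((α+εe)/2) ≤ b n ^ (βe - κ) :=
      Real.rpow_le_rpow_of_exponent_le hb1 he1
    have hmono2 : b n ^ ((α+εe)/2 + (βe-δe)*(1-αz)) ≤ b n ^ (βe - κ) :=
      Real.rpow_le_rpow_of_exponent_le hb1 he2
    calc c * ((n:ℝ) * EE n) ≤ c * ((2 * b n ^ ((α+εe)/2)) * EE n) :=
          mul_le_mul_of_nonneg_left (mul_le_mul_of_nonneg_right hnle hEEnn) hc0.le
      _ = 2*c*x₁ * b n ^ ((α+εe)/2)
          + (4*c/(1-αz)) * (b n ^ ((α+εe)/2) * b n ^ ((βe-δe)*(1-αz))) := by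
            simp only [hEE_def]
            rw [hTTe]; ring
      _ = 2*c*x₁ * b n ^ ((α+εe)/2)
          + (4*c/(1-αz)) * b n ^ ((α+εe)/2 + (βe-δe)*(1-αz)) := by
            rw [← Real.rpow_add hbpos]
      _ ≤ 2*c*x₁ * b n ^ (βe - κ) + (4*c/(1-αz)) * b n ^ (βe - κ) := by
            have hfac1 : (0:ℝ) ≤ 2*c*x₁ := by positivity
            have hfac2 : (0:ℝ) ≤ 4*c/(1-αz) := by positivity
            exact add_le_add (mul_le_mul_of_nonneg_left hmono1 hfac1)
              (mul_le_mul_of_nonneg_left hmono2 hfac2)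
      _ = K1 * b n ^ (βe - κ) := by rw [hK1_def]; ring
      _ ≤ (b n ^ κ / 2) * b n ^ (βe - κ) :=
          mul_le_mul_of_nonneg_right (by linarith) (Real.rpow_nonneg hbpos.le _)
      _ = BB n / 2 := by
          simp only [hBB_def]
          rw [div_mul_eq_mul_div, ← Real.rpow_add hbpos]
          norm_num

  -- main measure bound
  have Hmain : ∀ᶠ n : ℕ in atTop,
      μ {ω | ∃ i j₀ : Fin n, (∀ j : Fin n, |a n i j ω| ≤ |a n i j₀ ω|) ∧
          b n ^ ((3 : ℝ) / 4 + α / 8) < |a n i j₀ ω| ∧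
          b n ^ ((3 : ℝ) / 4 + α / 8) < (∑ j : Fin n, |a n i j ω|) - |a n i j₀ ω|}
        ≤ ENNReal.ofReal (r n) := by
    have hTTtop : Tendsto (fun n => TT n) atTop atTop := by
      simp only [hTT_def]
      exact (tendsto_rpow_atTop hβδpos).comp hbtop
    filter_upwards [hTTtop.eventually_ge_atTop x₁, hEV2] with n hx₁T hcondn
    have hBnpos : 0 < BB n := hBBpos n
    have hTnpos : 0 < TT n := hTTpos n
    set An : Set Ω := ⋃ i : Fin n, ⋃ j₀ : Fin n, ⋃ j₁ : Fin n,
      (if j₀ = j₁ then (∅ : Set Ω)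
        else {ω | BB n < |a n i j₀ ω|} ∩ {ω | TT n < |a n i j₁ ω|}) with hAn_def
    set Cn : Set Ω := ⋃ i : Fin n, {ω | BB n ≤ ∑ j, min |a n i j ω| (TT n)} with hCn_def
    have hsub : {ω | ∃ i j₀ : Fin n, (∀ j : Fin n, |a n i j ω| ≤ |a n i j₀ ω|) ∧
          b n ^ βe < |a n i j₀ ω| ∧
          b n ^ βe < (∑ j : Fin n, |a n i j ω|) - |a n i j₀ ω|} ⊆ An ∪ Cn := by
      rintro ω ⟨i, j₀, hmax, hB1, hB2⟩
      by_cases hcase : ∃ j₁, j₁ ≠ j₀ ∧ TT n < |a n i j₁ ω|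
      · obtain ⟨j₁, hne, hj₁⟩ := hcase
        left
        rw [hAn_def]
        refine Set.mem_iUnion.mpr ⟨i, Set.mem_iUnion.mpr ⟨j₀, Set.mem_iUnion.mpr ⟨j₁, ?_⟩⟩⟩
        rw [if_neg (Ne.symm hne)]
        exact ⟨hB1, hj₁⟩
      · right
        push_neg at hcase
        rw [hCn_def]
        refine Set.mem_iUnion.mpr ⟨i, ?_⟩
        show BB n ≤ ∑ j, min |a n i j ω| (TT n)
        have hstep : ∀ j ∈ Finset.univ.erase j₀, |a n i j ω| = min |a n i j ω| (TT n) :=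
          fun j hj => (min_eq_left (hcase j (Finset.ne_of_mem_erase hj))).symm
        calc BB n ≤ (∑ j, |a n i j ω|) - |a n i j₀ ω| := hB2.le
          _ = ∑ j ∈ Finset.univ.erase j₀, |a n i j ω| :=
              (Finset.sum_erase_eq_sub (Finset.mem_univ j₀)).symm
          _ = ∑ j ∈ Finset.univ.erase j₀, min |a n i j ω| (TT n) :=
              Finset.sum_congr rfl hstep
          _ ≤ ∑ j, min |a n i j ω| (TT n) :=
              Finset.sum_le_sum_of_subset_of_nonneg (Finset.subset_univ _)
                (fun j _ _ => le_min (abs_nonneg _) hTnpos.le)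
    have ha_sort : ∀ (i j : Fin n),
        a n (sortPair i j).1.1 (sortPair i j).1.2 = a n i j := by
      intro i j
      by_cases h1 : i ≤ j
      · simp [sortPair, h1]
      · simp only [sortPair, h1, dif_neg, not_false_iff]
        exact funext (hsymm n j i)
    -- A part
    have hSAle : ∀ i j₀ j₁ : Fin n,
        μ (if j₀ = j₁ then (∅ : Set Ω)
            else {ω | BB n < |a n i j₀ ω|} ∩ {ω | TT n < |a n i j₁ ω|})
          ≤ ENNReal.ofReal (g (BB n) * g (TT n)) := by
      intro i j₀ j₁
      by_cases hj : j₀ = j₁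
      · simp [hj]
      · rw [if_neg hj]
        have hqne : sortPair i j₀ ≠ sortPair i j₁ := fun hq => hj (sortPair_right_inj i hq)
        have hIF := (hindep n).indepFun hqne
        have hIF2 : IndepFun (a n i j₀) (a n i j₁) μ := by
          rw [← ha_sort i j₀, ← ha_sort i j₁]
          exact hIF
        have hmsB : MeasurableSet {x : ℝ | BB n < |x|} :=
          measurableSet_lt measurable_const measurable_abs
        have hmsT : MeasurableSet {x : ℝ | TT n < |x|} :=
          measurableSet_lt measurable_const measurable_abs
        have hprod := hIF2.measure_inter_preimage_eq_mul _ _ hmsB hmsT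
        have hp1 : a n i j₀ ⁻¹' {x | BB n < |x|} = {ω | BB n < |a n i j₀ ω|} := rfl
        have hp2 : a n i j₁ ⁻¹' {x | TT n < |x|} = {ω | TT n < |a n i j₁ ω|} := rfl
        rw [hp1, hp2] at hprod
        rw [hprod, htail' n i j₀ _ hBnpos, htail' n i j₁ _ hTnpos,
          ← ENNReal.ofReal_mul (hgnn _ hBnpos)]
    have hAbound : μ An ≤ ENNReal.ofReal ((n:ℝ)^3 * (g (BB n) * g (TT n))) := by
      have h1 : μ An ≤ ∑' i : Fin n, ∑' j₀ : Fin n, ∑' j₁ : Fin n,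
          μ (if j₀ = j₁ then (∅:Set Ω)
            else {ω | BB n < |a n i j₀ ω|} ∩ {ω | TT n < |a n i j₁ ω|}) := by
        rw [hAn_def]
        refine le_trans (measure_iUnion_le _) (ENNReal.tsum_le_tsum fun i => ?_)
        refine le_trans (measure_iUnion_le _) (ENNReal.tsum_le_tsum fun j₀ => ?_)
        exact measure_iUnion_le _
      have h2 : (∑' i : Fin n, ∑' j₀ : Fin n, ∑' j₁ : Fin n,
          μ (if j₀ = j₁ then (∅:Set Ω)
            else {ω | BB n < |a n i j₀ ω|} ∩ {ω | TT n < |a n i j₁ ω|}))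
          ≤ ∑' _i : Fin n, ∑' _j₀ : Fin n, ∑' _j₁ : Fin n,
            ENNReal.ofReal (g (BB n) * g (TT n)) := by
        refine ENNReal.tsum_le_tsum fun i => ENNReal.tsum_le_tsum fun j₀ =>
          ENNReal.tsum_le_tsum fun j₁ => hSAle i j₀ j₁
      have h3 : (∑' _i : Fin n, ∑' _j₀ : Fin n, ∑' _j₁ : Fin n,
            ENNReal.ofReal (g (BB n) * g (TT n)))
          = (n:ℝ≥0∞)^3 * ENNReal.ofReal (g (BB n) * g (TT n)) := by
        simp [tsum_fintype, Finset.sum_const, Finset.card_univ, nsmul_eq_mul]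
        ring
      have h4 : (n:ℝ≥0∞)^3 * ENNReal.ofReal (g (BB n) * g (TT n))
          = ENNReal.ofReal ((n:ℝ)^3 * (g (BB n) * g (TT n))) := by
        rw [ENNReal.ofReal_mul (by positivity : (0:ℝ) ≤ (n:ℝ)^3)]
        congr 1
        rw [← ENNReal.ofReal_natCast n, ← ENNReal.ofReal_pow (Nat.cast_nonneg n)]
      calc μ An ≤ _ := h1
        _ ≤ _ := h2
        _ = _ := h3
        _ = _ := h4
    -- C part
    have hEEnn : 0 ≤ EE n := by
      have h1αz : 0 < 1 - αz := by linarith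
      simp only [hEE_def]
      have h2 : 0 ≤ 2 * (TT n) ^ (1 - αz) / (1 - αz) :=
        div_nonneg (by positivity) h1αz.le
      linarith
    have hCi : ∀ i : Fin n, μ {ω | BB n ≤ ∑ j, min |a n i j ω| (TT n)}
        ≤ ENNReal.ofReal (Real.exp (-(b n ^ δe)/2)) := by
      intro i
      have hrow0 := iIndepFun_comp_inj (hindep n) (sortPair_right_inj i)
      have hfeq : (fun j : Fin n => a n (sortPair i j).1.1 (sortPair i j).1.2)
          = fun j => a n i j := funext fun j => ha_sort i j
      rw [hfeq] at hrow0
      have hZind := hrow0.comp (fun _ => fun x : ℝ => min |x| (TT n))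
        (fun _ => measurable_abs.min measurable_const)
      have hEYj : ∀ j : Fin n, ∫ ω, min |a n i j ω| (TT n) ∂μ ≤ EE n := by
        intro j
        have hmom := truncated_moment μ (fun ω => min |a n i j ω| (TT n))
          ((hmeas n i j).abs.min measurable_const)
          (fun ω => le_min (abs_nonneg _) hTnpos.le) (TT n) x₁ αz hx₁1 hx₁T hαzpos hαzlt1
          (fun ω => min_le_right _ _) ?_
        · exact hmom
        · intro t ht
          have ht2 : 0 < t := lt_trans (lt_of_lt_of_le one_pos hx₁1) ht
          have hsubt : {ω | t ≤ min |a n i j ω| (TT n)} ⊆ {ω | t/2 < |a n i j ω|} := by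
            intro ω hω
            have h1 : t ≤ |a n i j ω| := le_trans hω (min_le_left _ _)
            have h2 : t/2 < t := by linarith
            exact lt_of_lt_of_le h2 h1
          have hmeast : (μ {ω | t ≤ min |a n i j ω| (TT n)}).toReal
              ≤ (μ {ω | t/2 < |a n i j ω|}).toReal :=
            ENNReal.toReal_mono (measure_ne_top μ _) (measure_mono hsubt)
          rw [htail' n i j (t/2) (by linarith), ENNReal.toReal_ofReal
            (hgnn _ (by linarith))] at hmeast
          have hX₀t : X₀ ≤ t/2 := by rw [hx₁_def] at ht; linarith
          have hg1 : g (t/2) ≤ (t/2) ^ (-(α - εe)) := (hX₀ _ hX₀t).1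
          have ht21 : (1:ℝ) ≤ t/2 := le_trans hX₀1 hX₀t
          have hg2 : (t/2) ^ (-(α-εe)) ≤ (t/2) ^ (-αz) :=
            Real.rpow_le_rpow_of_exponent_le ht21 (by linarith [hαzle])
          have hg3 : (t/2) ^ (-αz) = t ^ (-αz) * ((2:ℝ) ^ αz) := by
            rw [Real.div_rpow ht2.le (by norm_num : (0:ℝ) ≤ 2), div_eq_mul_inv,
              ← Real.rpow_neg (by norm_num : (0:ℝ) ≤ 2), neg_neg]
          have hg4 : (2:ℝ) ^ αz ≤ 2 := by
            calc (2:ℝ) ^ αz ≤ (2:ℝ) ^ (1:ℝ) :=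
                Real.rpow_le_rpow_of_exponent_le one_le_two hαzlt1.le
              _ = 2 := Real.rpow_one 2
          calc (μ {ω | t ≤ min |a n i j ω| (TT n)}).toReal ≤ g (t/2) := hmeast
            _ ≤ (t/2)^(-αz) := le_trans hg1 hg2
            _ = t^(-αz) * (2:ℝ)^αz := hg3
            _ ≤ t^(-αz) * 2 := mul_le_mul_of_nonneg_left hg4 (Real.rpow_nonneg ht2.le _)
            _ = 2 * t^(-αz) := by ring
      have hchern := chernoff_row μ (fun j => fun ω => min |a n i j ω| (TT n))
        (fun j => (hmeas n i j).abs.min measurable_const) hZind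
        (fun j ω => le_min (abs_nonneg _) hTnpos.le) (TT n) (BB n) (EE n)
        hTnpos hBnpos (fun j ω => min_le_right _ _) hEYj hEEnn hcondn
      have hexpeq : BB n / (2 * TT n) = b n ^ δe / 2 := by
        simp only [hBB_def, hTT_def]
        rw [show βe = (βe - δe) + δe by ring, Real.rpow_add (hb n)]
        have hne : b n ^ (βe - δe) ≠ 0 := ne_of_gt (Real.rpow_pos_of_pos (hb n) _)
        field_simp
        rw [show βe - δe + δe - δe = βe - δe by ring, mul_div_right_comm, div_self hne, one_mul]
      have hfin : (μ {ω | BB n ≤ ∑ j, min |a n i j ω| (TT n)}).toReal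
          ≤ Real.exp (-(b n ^ δe)/2) := by
        have h5 := hchern
        rw [hexpeq] at h5
        have : -(b n ^ δe / 2) = -(b n ^ δe)/2 := by ring
        rwa [this] at h5
      calc μ {ω | BB n ≤ ∑ j, min |a n i j ω| (TT n)}
          = ENNReal.ofReal ((μ {ω | BB n ≤ ∑ j, min |a n i j ω| (TT n)}).toReal) :=
            (ENNReal.ofReal_toReal (measure_ne_top μ _)).symm
        _ ≤ ENNReal.ofReal (Real.exp (-(b n ^ δe)/2)) := ENNReal.ofReal_le_ofReal hfin
    have hCbound : μ Cn ≤ ENNReal.ofReal ((n:ℝ) * Real.exp (-(b n ^ δe)/2)) := by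
      calc μ Cn ≤ ∑' i : Fin n, μ {ω | BB n ≤ ∑ j, min |a n i j ω| (TT n)} := by
            rw [hCn_def]
            exact measure_iUnion_le _
        _ ≤ ∑' _i : Fin n, ENNReal.ofReal (Real.exp (-(b n ^ δe)/2)) :=
            ENNReal.tsum_le_tsum hCi
        _ = (n:ℝ≥0∞) * ENNReal.ofReal (Real.exp (-(b n ^ δe)/2)) := by
            simp [tsum_fintype, Finset.sum_const, Finset.card_univ, nsmul_eq_mul]
        _ = ENNReal.ofReal ((n:ℝ) * Real.exp (-(b n ^ δe)/2)) := by
            rw [← ENNReal.ofReal_natCast n,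
              ← ENNReal.ofReal_mul (Nat.cast_nonneg (α := ℝ) n)]
    have hcomb := le_trans (measure_mono (μ := μ) hsub) (measure_union_le (μ := μ) An Cn)
    calc μ {ω | ∃ i j₀ : Fin n, (∀ j : Fin n, |a n i j ω| ≤ |a n i j₀ ω|) ∧
          b n ^ βe < |a n i j₀ ω| ∧
          b n ^ βe < (∑ j : Fin n, |a n i j ω|) - |a n i j₀ ω|}
        ≤ μ An + μ Cn := hcomb
      _ ≤ ENNReal.ofReal ((n:ℝ)^3 * (g (BB n) * g (TT n)))
          + ENNReal.ofReal ((n:ℝ) * Real.exp (-(b n ^ δe)/2)) := add_le_add hAbound hCbound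
      _ = ENNReal.ofReal (r n) := by
          simp only [hr_def]
          rw [ENNReal.ofReal_add ?_ (by positivity)]
          exact mul_nonneg (by positivity) (mul_nonneg (hgnn _ hBnpos) (hgnn _ hTnpos))
  -- the real bound tends to zero
  have H2 : Tendsto r atTop (nhds 0) := by
    have hs1 : Tendsto (fun n : ℕ => 8 * b n ^ eA) atTop (nhds 0) := by
      have h0 : Tendsto (fun x : ℝ => x ^ eA) atTop (nhds 0) := by
        have h2 := tendsto_rpow_neg_atTop (neg_pos.mpr heAneg)
        simpa [neg_neg] using h2
      have h3 := (h0.comp hbtop).const_mul (8:ℝ)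
      simpa [mul_zero] using h3
    set s2 : ℕ → ℝ := fun n =>
      2 * ((b n ^ δe) ^ ((α+εe)/(2*δe)) * Real.exp (-(1/2) * (b n ^ δe))) with hs2_def
    have hs2 : Tendsto s2 atTop (nhds 0) := by
      have h0 := tendsto_rpow_mul_exp_neg_mul_atTop_nhds_zero ((α+εe)/(2*δe)) (1/2)
        (by norm_num)
      have hcomp := h0.comp ((tendsto_rpow_atTop hδpos).comp hbtop)
      have h3 := hcomp.const_mul (2:ℝ)
      simpa [hs2_def, mul_zero, Function.comp] using h3
    have hbound : ∀ᶠ n : ℕ in atTop,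
        0 ≤ r n ∧ r n ≤ 8 * b n ^ eA + s2 n := by
      have hBBtop : Tendsto (fun n => BB n) atTop atTop := by
        simp only [hBB_def]
        exact (tendsto_rpow_atTop hβpos).comp hbtop
      have hTTtop : Tendsto (fun n => TT n) atTop atTop := by
        simp only [hTT_def]
        exact (tendsto_rpow_atTop hβδpos).comp hbtop
      filter_upwards [hnb, hbtop.eventually_ge_atTop 1,
        hBBtop.eventually_ge_atTop X₀, hTTtop.eventually_ge_atTop X₀] with n hn2 hb1 hBX hTX
      obtain ⟨hnle, -⟩ := hn2
      have hbpos := hb n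
      have hBnpos := hBBpos n
      have hTnpos := hTTpos n
      have hgBnn : 0 ≤ g (BB n) := hgnn _ hBnpos
      have hgTnn : 0 ≤ g (TT n) := hgnn _ hTnpos
      have hr1nn : 0 ≤ (n:ℝ)^3 * (g (BB n) * g (TT n)) :=
        mul_nonneg (by positivity) (mul_nonneg hgBnn hgTnn)
      have hr2nn : 0 ≤ (n:ℝ) * Real.exp (-(b n ^ δe)/2) := by positivity
      constructor
      · simp only [hr_def]
        linarith
      · -- r1 bound
        have hgB : g (BB n) ≤ b n ^ (βe * (-(α-εe))) := by
          have h1 := (hX₀ _ hBX).1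
          rw [Real.rpow_mul hbpos.le]
          exact h1
        have hgT : g (TT n) ≤ b n ^ ((βe - δe) * (-(α-εe))) := by
          have h1 := (hX₀ _ hTX).1
          rw [Real.rpow_mul hbpos.le]
          exact h1
        have hn3 : (n:ℝ)^3 ≤ 8 * b n ^ (3*((α+εe)/2)) := by
          have h1 : (n:ℝ)^3 ≤ (2 * b n ^ ((α+εe)/2))^3 :=
            pow_le_pow_left₀ (Nat.cast_nonneg n) hnle 3
          have h2 : (2 * b n ^ ((α+εe)/2))^3 = 8 * (b n ^ ((α+εe)/2))^(3:ℕ) := by ring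
          rw [h2, ← Real.rpow_natCast (b n ^ ((α+εe)/2)) 3, ← Real.rpow_mul hbpos.le] at h1
          calc (n:ℝ)^3 ≤ 8 * b n ^ ((α+εe)/2 * (3:ℕ)) := h1
            _ = 8 * b n ^ (3*((α+εe)/2)) := by
              congr 2
              push_cast
              ring
        have hr1 : (n:ℝ)^3 * (g (BB n) * g (TT n)) ≤ 8 * b n ^ eA := by
          have hstep : (n:ℝ)^3 * (g (BB n) * g (TT n))
              ≤ (8 * b n ^ (3*((α+εe)/2))) * (b n ^ (βe * (-(α-εe)))
                * b n ^ ((βe - δe) * (-(α-εe)))) := by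
            apply mul_le_mul hn3 _ (mul_nonneg hgBnn hgTnn) (by positivity)
            exact mul_le_mul hgB hgT hgTnn (Real.rpow_nonneg hbpos.le _)
          calc (n:ℝ)^3 * (g (BB n) * g (TT n)) ≤ _ := hstep
            _ = 8 * (b n ^ (3*((α+εe)/2)) * (b n ^ (βe * (-(α-εe)))
                * b n ^ ((βe - δe) * (-(α-εe))))) := by ring
            _ = 8 * b n ^ eA := by
              rw [← Real.rpow_add hbpos, ← Real.rpow_add hbpos]
              congr 1
              rw [heA_def]
              ring
        -- r2 bound
        have heq2 : (b n ^ δe) ^ ((α+εe)/(2*δe)) = b n ^ ((α+εe)/2) := by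
          rw [← Real.rpow_mul hbpos.le]
          congr 1
          field_simp
        have hr2 : (n:ℝ) * Real.exp (-(b n ^ δe)/2) ≤ s2 n := by
          simp only [hs2_def]
          rw [heq2]
          have hee : -(b n ^ δe)/2 = -(1/2) * (b n ^ δe) := by ring
          rw [hee]
          have := mul_le_mul_of_nonneg_right hnle (Real.exp_nonneg (-(1/2) * (b n ^ δe)))
          calc (n:ℝ) * Real.exp (-(1/2) * (b n ^ δe))
              ≤ 2 * b n ^ ((α+εe)/2) * Real.exp (-(1/2) * (b n ^ δe)) := this
            _ = 2 * (b n ^ ((α+εe)/2) * Real.exp (-(1/2) * (b n ^ δe))) := by ring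
        simp only [hr_def]
        linarith
    apply squeeze_zero' (hbound.mono fun n hn => hn.1) (hbound.mono fun n hn => hn.2)
    have hsum := hs1.add hs2
    rw [add_zero] at hsum
    exact hsum
  -- conclusion
  have hofreal : Tendsto (fun n => ENNReal.ofReal (r n)) atTop (nhds 0) := by
    have := ENNReal.tendsto_ofReal (a := 0) H2
    simpa using this
  apply tendsto_of_tendsto_of_tendsto_of_le_of_le' tendsto_const_nhds hofreal
  · exact Filter.Eventually.of_forall fun n => by simp
  · exact Hmain
end
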